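/- arXiv:0908.3169 — 2 statements merged into one kernel-verified Lean document; each statement's English description precedes it below -/
import Mathlib

section
/- Let r ≥ 1 be an integer, let G be an r-connected graph, let S and T be two subsets of V(G), each of size at least r, and let P₁, ..., P_{r−1} be pairwise vertex-disjoint paths such that for each i the path P_i has ends s_i ∈ S and t_i ∈ T. Then there exist pairwise vertex-disjoint paths Q₁, ..., Q_r in G, each with one end in S and the other end in T, such that all but one of the paths Q_i have an end in {s₁, ..., s_{r−1}}, and all but one of the paths Q_i have an end in {t₁, ..., t_{r−1}}. -/
open SimpleGraph

/-- A graph is `t`-connected if it has at least `t+1` vertices and deleting any set of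
at most `t-1` vertices leaves it connected. -/
def KConnected {V : Type*} (t : ℕ) (G : SimpleGraph V) : Prop :=
  t + 1 ≤ Nat.card V ∧ ∀ S : Set V, S.ncard ≤ t - 1 → (G.induce Sᶜ).Connected

section Helpers

variable {V : Type} {G : SimpleGraph V}


/-- Split a walk at the first vertex satisfying `p`. -/
lemma splitAtFirst {a b : V} (p : V → Prop) (W : G.Walk a b) (hW : W.IsPath)
    (h : ∃ v ∈ W.support, p v) :
    ∃ (x : V) (W1 : G.Walk a x) (W2 : G.Walk x b),
      W1.IsPath ∧ W2.IsPath ∧ p x ∧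
      (∀ v ∈ W1.support, p v → v = x) ∧
      (∀ v ∈ W1.support, v ∈ W2.support → v = x) ∧
      (∀ v ∈ W1.support, v ∈ W.support) ∧
      (∀ v ∈ W2.support, v ∈ W.support) ∧
      (∀ v ∈ W.support, v ∈ W1.support ∨ v ∈ W2.support) := by
  classical
  induction W with
  | @nil u =>
    have hpu : p u := by
      obtain ⟨v, hv, hpv⟩ := h
      simp only [Walk.support_nil, List.mem_singleton] at hv
      rwa [hv] at hpv
    exact ⟨u, Walk.nil, Walk.nil, by simp, by simp, hpu, by simp, by simp, by simp, by simp,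
      by simp⟩
  | @cons u v w huv W ih =>
    by_cases hpu : p u
    · refine ⟨u, Walk.nil, Walk.cons huv W, by simp, hW, hpu, by simp, by simp, by simp,
        by simp, by simp⟩
    · have hW' : W.IsPath := hW.of_cons
      have h' : ∃ v ∈ W.support, p v := by
        obtain ⟨x, hx, hpx⟩ := h
        rw [Walk.support_cons, List.mem_cons] at hx
        rcases hx with rfl | hx
        · exact absurd hpx hpu
        · exact ⟨x, hx, hpx⟩
      obtain ⟨x, W1, W2, h1, h2, hpx, hfirst, hint, hs1, hs2, hcov⟩ := ih hW' h'
      have hunot : u ∉ W.support := by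
        have := hW.support_nodup
        rw [Walk.support_cons] at this
        exact (List.nodup_cons.mp this).1
      refine ⟨x, Walk.cons huv W1, W2, ?_, h2, hpx, ?_, ?_, ?_, ?_, ?_⟩
      · rw [Walk.cons_isPath_iff]
        exact ⟨h1, fun hu => hunot (hs1 u hu)⟩
      · intro y hy hpy
        rw [Walk.support_cons, List.mem_cons] at hy
        rcases hy with rfl | hy
        · exact absurd hpy hpu
        · exact hfirst y hy hpy
      · intro y hy hy2
        rw [Walk.support_cons, List.mem_cons] at hy
        rcases hy with rfl | hy
        · exact absurd (hs2 y hy2) hunot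
        · exact hint y hy hy2
      · intro y hy
        rw [Walk.support_cons, List.mem_cons] at hy ⊢
        rcases hy with rfl | hy
        · exact Or.inl rfl
        · exact Or.inr (hs1 y hy)
      · intro y hy
        rw [Walk.support_cons, List.mem_cons]
        exact Or.inr (hs2 y hy)
      · intro y hy
        rw [Walk.support_cons, List.mem_cons] at hy
        rcases hy with rfl | hy
        · exact Or.inl (by simp)
        · rcases hcov y hy with h | h
          · exact Or.inl (by rw [Walk.support_cons, List.mem_cons]; exact Or.inr h)
          · exact Or.inr h

/-- Appending two paths sharing only the junction vertex yields a path. -/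
lemma appendIsPath {a x b : V} {W1 : G.Walk a x} {W2 : G.Walk x b}
    (h1 : W1.IsPath) (h2 : W2.IsPath)
    (hint : ∀ v ∈ W1.support, v ∈ W2.support → v = x) :
    (W1.append W2).IsPath := by
  rw [Walk.isPath_def, Walk.support_append]
  apply List.Nodup.append h1.support_nodup (h2.support_nodup.sublist (List.tail_sublist _))
  intro v hv1 hv2
  have hv2' : v ∈ W2.support := by
    have := W2.support_eq_cons
    rw [this]; exact List.mem_cons_of_mem _ hv2
  have hvx := hint v hv1 hv2'
  subst hvx
  have := h2.support_nodup
  rw [W2.support_eq_cons] at this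
  exact (List.nodup_cons.mp this).1 hv2

lemma take_drop_inter {a b x : V} {W : G.Walk a b} (hW : W.IsPath) (hx : x ∈ W.support)
    [DecidableEq V] :
    ∀ v ∈ (W.takeUntil x hx).support, v ∈ (W.dropUntil x hx).support → v = x := by
  intro v hv1 hv2
  by_contra hne
  have hspec := W.take_spec hx
  have hsup : W.support = (W.takeUntil x hx).support ++ (W.dropUntil x hx).support.tail := by
    conv_lhs => rw [← hspec]
    exact Walk.support_append _ _
  have hnd := hW.support_nodup
  rw [hsup] at hnd
  have hdisj := List.disjoint_of_nodup_append hnd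
  have hv2' : v ∈ (W.dropUntil x hx).support.tail := by
    have := (W.dropUntil x hx).support_eq_cons
    rw [this] at hv2
    rcases List.mem_cons.mp hv2 with rfl | h
    · exact absurd rfl hne
    · exact h
  exact hdisj hv1 hv2'

lemma mem_append_iff {a x b : V} (W1 : G.Walk a x) (W2 : G.Walk x b) (v : V) :
    v ∈ (W1.append W2).support ↔ v ∈ W1.support ∨ v ∈ W2.support :=
  Walk.mem_support_append_iff _ _



/-- `SEP G S r B`: for every small vertex set `X`, there is a path from `S` to `B`
avoiding `X` and meeting `B` only in its last vertex. -/
def SEP (G : SimpleGraph V) (S : Set V) (r : ℕ) (B : Set V) : Prop :=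
  ∀ X : Set V, X.ncard ≤ r - 1 →
    ∃ (a c : V) (W : G.Walk a c), a ∈ S ∧ c ∈ B ∧ W.IsPath ∧
      (∀ v ∈ W.support, v ∉ X) ∧ (∀ v ∈ W.support, v ∈ B → v = c)

lemma SEP.mono {S : Set V} {r : ℕ} {B B' : Set V} (hBB : B ⊆ B') (h : SEP G S r B) :
    SEP G S r B' := by
  intro X hX
  obtain ⟨a, c, W, ha, hc, hW, hX', hB⟩ := h X hX
  obtain ⟨x, W1, W2, h1, _, hx, hfirst, _, hs1, _, _⟩ :=
    splitAtFirst (· ∈ B') W hW ⟨c, W.end_mem_support, hBB hc⟩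
  exact ⟨a, x, W1, ha, hx, h1, fun v hv => hX' v (hs1 v hv), hfirst⟩

lemma sep_of_kconnected [Fintype V] [DecidableEq V] {r : ℕ} (hr : 1 ≤ r) (hG : KConnected r G)
    {S T : Set V} (hS : r ≤ S.ncard) (hT : r ≤ T.ncard) : SEP G S r T := by
  intro X hX
  have hconn := hG.2 X hX
  have hSx : ∃ a ∈ S, a ∉ X := by
    by_contra hcon
    push_neg at hcon
    have := Set.ncard_le_ncard hcon (Set.toFinite X)
    omega
  have hTx : ∃ c ∈ T, c ∉ X := by
    by_contra hcon
    push_neg at hcon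
    have := Set.ncard_le_ncard hcon (Set.toFinite X)
    omega
  obtain ⟨a, haS, haX⟩ := hSx
  obtain ⟨c, hcT, hcX⟩ := hTx
  have hreach := hconn.preconnected ⟨a, haX⟩ ⟨c, hcX⟩
  obtain ⟨W0⟩ := hreach
  let f : G.induce Xᶜ →g G := ⟨Subtype.val, fun {u v} h => h⟩
  let W1 : G.Walk a c := W0.map f
  have hsub : ∀ v ∈ W1.support, v ∉ X := by
    intro v hv
    rw [Walk.support_map, List.mem_map] at hv
    obtain ⟨⟨u, hu⟩, _, rfl⟩ := hv
    exact hu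
  classical
  let W2 : G.Walk a c := W1.bypass
  have hW2 : W2.IsPath := Walk.bypass_isPath W1
  have hsub2 : ∀ v ∈ W2.support, v ∉ X := fun v hv => hsub v (Walk.support_bypass_subset _ hv)
  obtain ⟨x, Wa, _, h1, _, hx, hfirst, _, hs1, _, _⟩ :=
    splitAtFirst (· ∈ T) W2 hW2 ⟨c, W2.end_mem_support, hcT⟩
  exact ⟨a, x, Wa, haS, hx, h1, fun v hv => hsub2 v (hs1 v hv), hfirst⟩


/-- An `S`–`B` path meeting `B` only in its final vertex. -/
structure STP (G : SimpleGraph V) (S B : Set V) where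
  a : V
  b : V
  w : G.Walk a b
  ha : a ∈ S
  hb : b ∈ B
  hp : w.IsPath
  hB : ∀ v ∈ w.support, v ∈ B → v = b

def PDisj {k : ℕ} {S B : Set V} (f : Fin k → STP G S B) : Prop :=
  ∀ i j, i ≠ j → ∀ v, v ∈ (f i).w.support → v ∉ (f j).w.support

lemma count_surj {r : ℕ} {α : Type*} (d : Fin r → α) (hd : Function.Injective d)
    (bend : Fin (r - 1) → α) (m₁ : Fin r) (h : ∀ m, m ≠ m₁ → ∃ i, d m = bend i) :
    (∀ i, ∃ m, m ≠ m₁ ∧ d m = bend i) ∧ (∀ i, d m₁ ≠ bend i) := by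
  classical
  rcases Nat.eq_zero_or_pos r with rfl | hr
  · exact ⟨fun i => absurd (Fin.pos i) (by simp), fun i => absurd (Fin.pos i) (by simp)⟩
  let F : {m : Fin r // m ≠ m₁} → Fin (r - 1) := fun m => (h m.1 m.2).choose
  have hFspec : ∀ m, d m.1 = bend (F m) := fun m => (h m.1 m.2).choose_spec
  have Finj : Function.Injective F := by
    intro m m' he
    apply Subtype.ext
    apply hd
    rw [hFspec m, hFspec m', he]
  have hcard : Fintype.card {m : Fin r // m ≠ m₁} = Fintype.card (Fin (r - 1)) := by
    have h1 : Fintype.card {m : Fin r // m ≠ m₁} = r - 1 := by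
      have := Fintype.card_subtype_compl (fun m : Fin r => m = m₁)
      simp only [Fintype.card_subtype_eq, Fintype.card_fin] at this
      convert this using 2
    simp [h1]
  have Fbij : Function.Bijective F :=
    (Fintype.bijective_iff_injective_and_card F).mpr ⟨Finj, hcard⟩
  constructor
  · intro i
    obtain ⟨m, hm⟩ := Fbij.2 i
    exact ⟨m.1, m.2, by rw [hFspec m, hm]⟩
  · intro i he
    obtain ⟨m, hm⟩ := Fbij.2 i
    have : d m.1 = d m₁ := by rw [hFspec m, hm, ← he]
    exact m.2 (hd this)

lemma assemble {r : ℕ} {S B B' : Set V} (hBB : B ⊆ B')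
    (out' : Fin r → STP G S B') (hdis : PDisj out')
    (m_x m₁ : Fin r) (hne : m_x ≠ m₁)
    (bend astart : Fin (r - 1) → V) (j : Fin (r - 1))
    (hbend : ∀ m, m ≠ m_x → m ≠ m₁ → ∃ i, i ≠ j ∧ (out' m).b = bend i ∧ bend i ∈ B)
    {zx z1 : V}
    (Wx : G.Walk (out' m_x).b zx) (W1 : G.Walk (out' m₁).b z1)
    (hWxp : Wx.IsPath) (hW1p : W1.IsPath)
    (hzx : zx ∈ B) (hz1 : z1 ∈ B)
    (hWxB' : ∀ v ∈ Wx.support, v ∈ B') (hW1B' : ∀ v ∈ W1.support, v ∈ B')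
    (hWxB : ∀ v ∈ Wx.support, v ∈ B → v = zx) (hW1B : ∀ v ∈ W1.support, v ∈ B → v = z1)
    (hWxW1 : ∀ v ∈ Wx.support, v ∉ W1.support)
    (hWxend : ∀ m, m ≠ m_x → (out' m).b ∉ Wx.support)
    (hW1end : ∀ m, m ≠ m₁ → (out' m).b ∉ W1.support)
    (hflag : zx = bend j ∨ z1 = bend j)
    (hstart : ∃ m₀, ∀ m, m ≠ m₀ → ∃ i, (out' m).a = astart i) :
    ∃ out : Fin r → STP G S B, PDisj out ∧
      (∃ m₀, ∀ m, m ≠ m₀ → ∃ i, (out m).a = astart i) ∧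
      (∃ m₁', ∀ m, m ≠ m₁' → ∃ i, (out m).b = bend i) := by
  classical
  -- the two extended paths
  have hPxint : ∀ v ∈ (out' m_x).w.support, v ∈ Wx.support → v = (out' m_x).b :=
    fun v hv hv2 => (out' m_x).hB v hv (hWxB' v hv2)
  have hP1int : ∀ v ∈ (out' m₁).w.support, v ∈ W1.support → v = (out' m₁).b :=
    fun v hv hv2 => (out' m₁).hB v hv (hW1B' v hv2)
  let Px : STP G S B :=
    { a := (out' m_x).a, b := zx, w := (out' m_x).w.append Wx, ha := (out' m_x).ha,
      hb := hzx,
      hp := appendIsPath (out' m_x).hp hWxp hPxint,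
      hB := by
        intro v hv hvB
        rw [mem_append_iff] at hv
        rcases hv with hv | hv
        · have hveq := (out' m_x).hB v hv (hBB hvB)
          subst hveq
          exact hWxB _ Wx.start_mem_support hvB
        · exact hWxB v hv hvB }
  let P1 : STP G S B :=
    { a := (out' m₁).a, b := z1, w := (out' m₁).w.append W1, ha := (out' m₁).ha,
      hb := hz1,
      hp := appendIsPath (out' m₁).hp hW1p hP1int,
      hB := by
        intro v hv hvB
        rw [mem_append_iff] at hv
        rcases hv with hv | hv
        · have hveq := (out' m₁).hB v hv (hBB hvB)
          subst hveq
          exact hW1B _ W1.start_mem_support hvB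
        · exact hW1B v hv hvB }
  let base : ∀ m, m ≠ m_x → m ≠ m₁ → STP G S B := fun m hmx hm1 =>
    { a := (out' m).a, b := (out' m).b, w := (out' m).w, ha := (out' m).ha,
      hb := by obtain ⟨i, _, he, hi⟩ := hbend m hmx hm1; rw [he]; exact hi,
      hp := (out' m).hp,
      hB := fun v hv hvB => (out' m).hB v hv (hBB hvB) }
  let out : Fin r → STP G S B := fun m =>
    if h : m = m_x then Px else if h' : m = m₁ then P1 else base m h h'
  have hout_mx : out m_x = Px := by simp [out]
  have hout_m1 : out m₁ = P1 := by
    simp only [out]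
    rw [dif_neg (fun h => hne (h.symm))]
    simp
  have hout_base : ∀ m (hmx : m ≠ m_x) (hm1 : m ≠ m₁), out m = base m hmx hm1 := by
    intro m hmx hm1
    simp only [out]
    rw [dif_neg hmx, dif_neg hm1]
  -- supports
  have hPx_supp : ∀ v, v ∈ Px.w.support ↔ v ∈ (out' m_x).w.support ∨ v ∈ Wx.support :=
    fun v => mem_append_iff _ _ v
  have hP1_supp : ∀ v, v ∈ P1.w.support ↔ v ∈ (out' m₁).w.support ∨ v ∈ W1.support :=
    fun v => mem_append_iff _ _ v
  -- disjointness facts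
  have hWx_out : ∀ m, m ≠ m_x → ∀ v ∈ Wx.support, v ∉ (out' m).w.support := by
    intro m hm v hv hv2
    have := (out' m).hB v hv2 (hWxB' v hv)
    subst this
    exact hWxend m hm hv
  have hW1_out : ∀ m, m ≠ m₁ → ∀ v ∈ W1.support, v ∉ (out' m).w.support := by
    intro m hm v hv hv2
    have := (out' m).hB v hv2 (hW1B' v hv)
    subst this
    exact hW1end m hm hv
  have D1 : ∀ v ∈ Px.w.support, v ∉ P1.w.support := by
    intro v hv hv2
    rw [hPx_supp] at hv; rw [hP1_supp] at hv2
    rcases hv with hv | hv <;> rcases hv2 with hv2 | hv2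
    · exact hdis m_x m₁ hne v hv hv2
    · exact hW1_out m_x hne v hv2 hv
    · exact hWx_out m₁ (Ne.symm hne) v hv hv2
    · exact hWxW1 v hv hv2
  have D2 : ∀ m, m ≠ m_x → m ≠ m₁ → ∀ v ∈ Px.w.support, v ∉ (out' m).w.support := by
    intro m hmx hm1 v hv hv2
    rw [hPx_supp] at hv
    rcases hv with hv | hv
    · exact hdis m_x m (fun h => hmx h.symm) v hv hv2
    · exact hWx_out m hmx v hv hv2
  have D3 : ∀ m, m ≠ m_x → m ≠ m₁ → ∀ v ∈ P1.w.support, v ∉ (out' m).w.support := by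
    intro m hmx hm1 v hv hv2
    rw [hP1_supp] at hv
    rcases hv with hv | hv
    · exact hdis m₁ m (fun h => hm1 h.symm) v hv hv2
    · exact hW1_out m hm1 v hv hv2
  have hdisj_out : PDisj out := by
    intro m m' hmm' v hv hv2
    by_cases h1 : m = m_x <;> by_cases h2 : m' = m_x
    · exact hmm' (h1.trans h2.symm)
    · subst h1
      rw [hout_mx] at hv
      by_cases h3 : m' = m₁
      · subst h3; rw [hout_m1] at hv2; exact D1 v hv hv2
      · rw [hout_base m' h2 h3] at hv2; exact D2 m' h2 h3 v hv hv2
    · subst h2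
      rw [hout_mx] at hv2
      by_cases h3 : m = m₁
      · subst h3; rw [hout_m1] at hv; exact D1 v hv2 hv
      · rw [hout_base m h1 h3] at hv; exact D2 m h1 h3 v hv2 hv
    · by_cases h3 : m = m₁ <;> by_cases h4 : m' = m₁
      · exact hmm' (h3.trans h4.symm)
      · subst h3
        rw [hout_m1] at hv; rw [hout_base m' h2 h4] at hv2
        exact D3 m' h2 h4 v hv hv2
      · subst h4
        rw [hout_m1] at hv2; rw [hout_base m h1 h3] at hv
        exact D3 m h1 h3 v hv2 hv
      · rw [hout_base m h1 h3] at hv; rw [hout_base m' h2 h4] at hv2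
        exact hdis m m' hmm' v hv hv2
  have ha_eq : ∀ m, (out m).a = (out' m).a := by
    intro m
    by_cases h1 : m = m_x
    · subst h1; rw [hout_mx]
    · by_cases h2 : m = m₁
      · subst h2; rw [hout_m1]
      · rw [hout_base m h1 h2]
  refine ⟨out, hdisj_out, ?_, ?_⟩
  · obtain ⟨m₀, hm₀⟩ := hstart
    exact ⟨m₀, fun m hm => by rw [ha_eq]; exact hm₀ m hm⟩
  · rcases hflag with hfl | hfl
    · refine ⟨m₁, fun m hm => ?_⟩
      by_cases h1 : m = m_x
      · subst h1; rw [hout_mx]; exact ⟨j, hfl⟩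
      · rw [hout_base m h1 hm]
        obtain ⟨i, _, he, _⟩ := hbend m h1 hm
        exact ⟨i, he⟩
    · refine ⟨m_x, fun m hm => ?_⟩
      by_cases h1 : m = m₁
      · subst h1; rw [hout_m1]; exact ⟨j, hfl⟩
      · rw [hout_base m hm h1]
        obtain ⟨i, _, he, _⟩ := hbend m hm h1
        exact ⟨i, he⟩

lemma menger_step [Fintype V] {S : Set V} {r : ℕ} (hr : 1 ≤ r) :
    ∀ (n : ℕ) (B : Set V), (Bᶜ).ncard ≤ n → SEP G S r B →
    ∀ sys : Fin (r - 1) → STP G S B, PDisj sys →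
    ∃ out : Fin r → STP G S B, PDisj out ∧
      (∃ m₀, ∀ m, m ≠ m₀ → ∃ i, (out m).a = (sys i).a) ∧
      (∃ m₁', ∀ m, m ≠ m₁' → ∃ i, (out m).b = (sys i).b) := by
  classical
  intro n
  induction n using Nat.strong_induction_on with
  | _ n IH =>
  intro B hB hsep sys hdisjsys
  set X : Set V := Set.range (fun i => (sys i).b) with hXdef
  have hXcard : X.ncard ≤ r - 1 := by
    rw [hXdef, ← Set.image_univ]
    refine le_trans (Set.ncard_image_le Set.finite_univ) ?_
    rw [Set.ncard_univ]
    simp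
  obtain ⟨aR, tR, R, haR, htR, hRp, hRX, hRB⟩ := hsep X hXcard
  by_cases hmeet : ∃ v, v ∈ R.support ∧ ∃ i, v ∈ (sys i).w.support
  · -- Case 2 : R meets the system; reroute
    obtain ⟨v0, hv0R, hv0U⟩ := hmeet
    set U : V → Prop := fun v => ∃ i, v ∈ (sys i).w.support with hUdef
    have hRrev : R.reverse.IsPath := hRp.reverse
    obtain ⟨x, W1, W2, hW1p, _, hxU, hfirst, hint, hs1, hs2, hcov⟩ :=
      splitAtFirst U R.reverse hRrev
        ⟨v0, by rw [Walk.support_reverse]; exact List.mem_reverse.mpr hv0R, hv0U⟩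
    set Rtail : G.Walk x tR := W1.reverse with hRtdef
    have hRtailp : Rtail.IsPath := hW1p.reverse
    have hRtail_sub : ∀ v ∈ Rtail.support, v ∈ R.support := by
      intro v hv
      have h1 : v ∈ W1.support := by
        rwa [hRtdef, Walk.support_reverse, List.mem_reverse] at hv
      have h2 := hs1 v h1
      rwa [Walk.support_reverse, List.mem_reverse] at h2
    have hRtailU : ∀ v ∈ Rtail.support, U v → v = x := by
      intro v hv
      have h1 : v ∈ W1.support := by
        rwa [hRtdef, Walk.support_reverse, List.mem_reverse] at hv
      exact hfirst v h1
    have hxRtail : x ∈ Rtail.support := Rtail.start_mem_support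
    have htRRtail : tR ∈ Rtail.support := Rtail.end_mem_support
    obtain ⟨j, hxj⟩ := hxU
    have hxX : x ∉ X := hRX x (hRtail_sub x hxRtail)
    have hxB : x ∉ B := by
      intro hxB
      exact hxX ⟨j, ((sys j).hB x hxj hxB).symm⟩
    have hbjB := (sys j).hb
    have hxbj : x ≠ (sys j).b := fun h => hxB (h ▸ hbjB)
    have htRnU : ¬ U tR := by
      intro h
      have h2 := hRtailU tR htRRtail h
      exact hxB (h2 ▸ htR)
    have hxtR : x ≠ tR := fun h => htRnU (h ▸ ⟨j, hxj⟩)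
    set Ptail : G.Walk x (sys j).b := (sys j).w.dropUntil x hxj with hPtdef
    set Phead : G.Walk (sys j).a x := (sys j).w.takeUntil x hxj with hPhdef
    have hPtailp : Ptail.IsPath := (sys j).hp.dropUntil hxj
    have hPheadp : Phead.IsPath := (sys j).hp.takeUntil hxj
    have hPtail_sub : ∀ v ∈ Ptail.support, v ∈ (sys j).w.support := fun v hv =>
      Walk.support_dropUntil_subset _ hxj hv
    have hPhead_sub : ∀ v ∈ Phead.support, v ∈ (sys j).w.support := fun v hv =>
      Walk.support_takeUntil_subset _ hxj hv
    have htdinter := take_drop_inter (sys j).hp hxj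
    set B' : Set V := B ∪ {v | v ∈ Ptail.support} ∪ {v | v ∈ Rtail.support} with hB'def
    have hBB' : B ⊆ B' := fun v hv => Or.inl (Or.inl hv)
    have hPtailB' : ∀ v ∈ Ptail.support, v ∈ B' := fun v hv => Or.inl (Or.inr hv)
    have hRtailB' : ∀ v ∈ Rtail.support, v ∈ B' := fun v hv => Or.inr hv
    have hxB' : x ∈ B' := hPtailB' x Ptail.start_mem_support
    have hmeas : (B'ᶜ).ncard < n := by
      have hss : B'ᶜ ⊂ Bᶜ := by
        rw [Set.ssubset_def]
        constructor
        · exact Set.compl_subset_compl.mpr hBB'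
        · intro hcon
          exact (hcon hxB) hxB'
      exact lt_of_lt_of_le (Set.ncard_lt_ncard hss (Set.toFinite _)) hB
    have hsep' : SEP G S r B' := hsep.mono hBB'
    have hPheadB' : ∀ v ∈ Phead.support, v ∈ B' → v = x := by
      intro v hv hvB'
      rcases hvB' with (hvB | hvP) | hvR
      · have hvbj := (sys j).hB v (hPhead_sub v hv) hvB
        exact htdinter v hv (by rw [hvbj]; exact Ptail.end_mem_support)
      · exact htdinter v hv hvP
      · exact hRtailU v hvR ⟨j, hPhead_sub v hv⟩
    have hsysB'_old : ∀ i, i ≠ j → ∀ v ∈ (sys i).w.support, v ∈ B' → v = (sys i).b := by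
      intro i hij v hv hvB'
      rcases hvB' with (hvB | hvP) | hvR
      · exact (sys i).hB v hv hvB
      · exact absurd (hPtail_sub v hvP) (hdisjsys i j hij v hv)
      · have hvx := hRtailU v hvR ⟨i, hv⟩
        exact absurd (show v ∈ (sys j).w.support by rw [hvx]; exact hxj)
          (hdisjsys i j hij v hv)
    set sysJ : STP G S B' := ⟨(sys j).a, x, Phead, (sys j).ha, hxB', hPheadp, hPheadB'⟩
      with hsysJdef
    set sys' : Fin (r - 1) → STP G S B' := fun i =>
      if h : i = j then sysJ else
        ⟨(sys i).a, (sys i).b, (sys i).w, (sys i).ha, hBB' (sys i).hb, (sys i).hp,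
          hsysB'_old i h⟩ with hsys'def
    have hsys'a : ∀ i, (sys' i).a = (sys i).a := by
      intro i
      by_cases h : i = j
      · subst h; simp [hsys'def, hsysJdef]
      · simp [hsys'def, h]
    have hsys'b : ∀ i, (sys' i).b = if i = j then x else (sys i).b := by
      intro i
      by_cases h : i = j
      · subst h; simp [hsys'def, hsysJdef]
      · simp [hsys'def, h]
    have hsys'j : sys' j = sysJ := by simp [hsys'def]
    have hsys'ne : ∀ (i) (h : i ≠ j), sys' i =
        ⟨(sys i).a, (sys i).b, (sys i).w, (sys i).ha, hBB' (sys i).hb, (sys i).hp,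
          hsysB'_old i h⟩ := by
      intro i h
      simp [hsys'def, h]
    have hsys'supp : ∀ i v, v ∈ (sys' i).w.support → v ∈ (sys i).w.support := by
      intro i v
      by_cases h : i = j
      · subst h; rw [hsys'j]; exact hPhead_sub v
      · rw [hsys'ne i h]; exact id
    have hdisjsys' : PDisj sys' := by
      intro i i' hii' v hv hv'
      exact hdisjsys i i' hii' v (hsys'supp i v hv) (hsys'supp i' v hv')
    obtain ⟨out', hdis', ⟨m₀, hm₀⟩, ⟨m₁, hm₁⟩⟩ :=
      IH (B'ᶜ).ncard hmeas B' le_rfl hsep' sys' hdisjsys'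
    have hdinj : Function.Injective (fun m => (out' m).b) := by
      intro m m' he
      by_contra hne'
      have he' : (out' m).b = (out' m').b := he
      exact hdis' m m' hne' (out' m).b ((out' m).w.end_mem_support)
        (by rw [he']; exact (out' m').w.end_mem_support)
    obtain ⟨hsurj, hfree⟩ := count_surj (fun m => (out' m).b) hdinj (fun i => (sys' i).b) m₁ hm₁
    obtain ⟨m_x, hmx_ne, hmx_b⟩ := hsurj j
    have hmx_bx : (out' m_x).b = x := by
      rw [show (out' m_x).b = (sys' j).b from hmx_b, hsys'b, if_pos rfl]
    have hfB' : (out' m₁).b ∈ B' := (out' m₁).hb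
    have hfx : (out' m₁).b ≠ x := by
      have h : (out' m₁).b ≠ (sys' j).b := hfree j
      rwa [hsys'b, if_pos rfl] at h
    have hfbi : ∀ i, i ≠ j → (out' m₁).b ≠ (sys i).b := by
      intro i hij
      have h : (out' m₁).b ≠ (sys' i).b := hfree i
      rwa [hsys'b, if_neg hij] at h
    have hbend : ∀ m, m ≠ m_x → m ≠ m₁ →
        ∃ i, i ≠ j ∧ (out' m).b = (sys i).b ∧ (sys i).b ∈ B := by
      intro m hmx hm1
      obtain ⟨i, hi⟩ := hm₁ m hm1
      have hij : i ≠ j := by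
        intro h
        subst h
        rw [hsys'b, if_pos rfl] at hi
        exact hmx (hdinj (show (out' m).b = (out' m_x).b by rw [hi, hmx_bx]))
      rw [hsys'b, if_neg hij] at hi
      exact ⟨i, hij, hi, (sys i).hb⟩
    have hPtailB : ∀ v ∈ Ptail.support, v ∈ B → v = (sys j).b := fun v hv hvB =>
      (sys j).hB v (hPtail_sub v hv) hvB
    have hRtailB : ∀ v ∈ Rtail.support, v ∈ B → v = tR := fun v hv =>
      hRB v (hRtail_sub v hv)
    have hPR : ∀ v ∈ Ptail.support, v ∈ Rtail.support → v = x := fun v hvP hvR =>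
      hRtailU v hvR ⟨j, hPtail_sub v hvP⟩
    have hbiP : ∀ i, i ≠ j → (sys i).b ∉ Ptail.support := fun i hij hmem =>
      hdisjsys i j hij _ ((sys i).w.end_mem_support) (hPtail_sub _ hmem)
    have htRX : tR ∉ X := hRX tR R.end_mem_support
    have hbiR : ∀ i, (sys i).b ∉ Rtail.support := by
      intro i hmem
      have h := hRtailB _ hmem (sys i).hb
      exact htRX (h ▸ ⟨i, rfl⟩)
    have hend_nP : ∀ m, m ≠ m_x → m ≠ m₁ → (out' m).b ∉ Ptail.support := by
      intro m hmx hm1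
      obtain ⟨i, hij, he, _⟩ := hbend m hmx hm1
      rw [he]
      exact hbiP i hij
    have hend_nR : ∀ m, m ≠ m_x → m ≠ m₁ → (out' m).b ∉ Rtail.support := by
      intro m hmx hm1
      obtain ⟨i, hij, he, _⟩ := hbend m hmx hm1
      rw [he]
      exact hbiR i
    have hstart' : ∃ m₀, ∀ m, m ≠ m₀ → ∃ i, (out' m).a = (sys i).a := by
      refine ⟨m₀, fun m hm => ?_⟩
      obtain ⟨i, hi⟩ := hm₀ m hm
      exact ⟨i, by rw [hi, hsys'a]⟩
    -- subcases on where f := (out' m₁).b lies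
    by_cases hfP : (out' m₁).b ∈ Ptail.support
    · by_cases hfbj : (out' m₁).b = (sys j).b
      · -- extend m_x along Rtail, m₁ already ends at b j ∈ B
        refine assemble hBB' out' hdis' m_x m₁ hmx_ne _ _ j hbend
          (Rtail.copy hmx_bx.symm rfl) (Walk.nil' (out' m₁).b) ?_ ?_ htR
          (by rw [hfbj]; exact hbjB) ?_ ?_ ?_ ?_ ?_ ?_ ?_ (Or.inr hfbj) hstart'
        · rwa [Walk.isPath_copy]
        · exact Walk.IsPath.nil
        · intro v hv; rw [Walk.support_copy] at hv; exact hRtailB' v hv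
        · intro v hv
          rw [Walk.support_nil, List.mem_singleton] at hv
          subst hv; exact hfB'
        · intro v hv; rw [Walk.support_copy] at hv; exact fun hvB => hRtailB v hv hvB
        · intro v hv
          rw [Walk.support_nil, List.mem_singleton] at hv
          subst hv; exact fun _ => rfl
        · intro v hv hv2
          rw [Walk.support_copy] at hv
          rw [Walk.support_nil, List.mem_singleton] at hv2
          subst hv2
          exact hbiR j (by rwa [hfbj] at hv)
        · intro m hm
          rw [Walk.support_copy]
          by_cases hm1 : m = m₁
          · subst hm1
            intro hmem
            exact hbiR j (by rwa [hfbj] at hmem)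
          · exact hend_nR m hm hm1
        · intro m hm
          rw [Walk.support_nil, List.mem_singleton]
          intro hmem
          exact hm (hdinj hmem)
      · -- f strictly inside Ptail : extend m₁ along Ptail to b j, extend m_x along Rtail
        have hPsegp : (Ptail.dropUntil _ hfP).IsPath := hPtailp.dropUntil hfP
        have hPseg_sub : ∀ v ∈ (Ptail.dropUntil _ hfP).support, v ∈ Ptail.support :=
          fun v hv => Walk.support_dropUntil_subset _ hfP hv
        have hxPseg : x ∉ (Ptail.dropUntil _ hfP).support := by
          intro h
          exact hfx ((take_drop_inter hPtailp hfP x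
            (Ptail.takeUntil _ hfP).start_mem_support h).symm)
        refine assemble hBB' out' hdis' m_x m₁ hmx_ne _ _ j hbend
          (Rtail.copy hmx_bx.symm rfl) (Ptail.dropUntil _ hfP) ?_ hPsegp htR hbjB
          ?_ ?_ ?_ ?_ ?_ ?_ ?_ (Or.inr rfl) hstart'
        · rwa [Walk.isPath_copy]
        · intro v hv; rw [Walk.support_copy] at hv; exact hRtailB' v hv
        · intro v hv; exact hPtailB' v (hPseg_sub v hv)
        · intro v hv; rw [Walk.support_copy] at hv; exact fun hvB => hRtailB v hv hvB
        · intro v hv hvB; exact hPtailB v (hPseg_sub v hv) hvB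
        · intro v hv hv2
          rw [Walk.support_copy] at hv
          have := hPR v (hPseg_sub v hv2) hv
          subst this
          exact hxPseg hv2
        · intro m hm
          rw [Walk.support_copy]
          by_cases hm1 : m = m₁
          · subst hm1
            intro hmem
            exact hfx (hPR _ hfP hmem)
          · exact hend_nR m hm hm1
        · intro m hm
          by_cases hmx : m = m_x
          · subst hmx
            rw [hmx_bx]
            exact hxPseg
          · intro hmem
            exact hend_nP m hmx hm (hPseg_sub _ hmem)
    · by_cases hfR : (out' m₁).b ∈ Rtail.support
      · -- f inside Rtail : extend m₁ along Rtail to tR, extend m_x along Ptail to b j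
        have hRsegp : (Rtail.dropUntil _ hfR).IsPath := hRtailp.dropUntil hfR
        have hRseg_sub : ∀ v ∈ (Rtail.dropUntil _ hfR).support, v ∈ Rtail.support :=
          fun v hv => Walk.support_dropUntil_subset _ hfR hv
        have hxRseg : x ∉ (Rtail.dropUntil _ hfR).support := by
          intro h
          exact hfx ((take_drop_inter hRtailp hfR x
            (Rtail.takeUntil _ hfR).start_mem_support h).symm)
        refine assemble hBB' out' hdis' m_x m₁ hmx_ne _ _ j hbend
          (Ptail.copy hmx_bx.symm rfl) (Rtail.dropUntil _ hfR) ?_ hRsegp hbjB htR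
          ?_ ?_ ?_ ?_ ?_ ?_ ?_ (Or.inl rfl) hstart'
        · rwa [Walk.isPath_copy]
        · intro v hv; rw [Walk.support_copy] at hv; exact hPtailB' v hv
        · intro v hv; exact hRtailB' v (hRseg_sub v hv)
        · intro v hv; rw [Walk.support_copy] at hv; exact fun hvB => hPtailB v hv hvB
        · intro v hv hvB; exact hRtailB v (hRseg_sub v hv) hvB
        · intro v hv hv2
          rw [Walk.support_copy] at hv
          have := hPR v hv (hRseg_sub v hv2)
          subst this
          exact hxRseg hv2
        · intro m hm
          rw [Walk.support_copy]
          by_cases hm1 : m = m₁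
          · subst hm1
            exact hfP
          · exact hend_nP m hm hm1
        · intro m hm
          by_cases hmx : m = m_x
          · subst hmx
            rw [hmx_bx]
            exact hxRseg
          · intro hmem
            exact hend_nR m hmx hm (hRseg_sub _ hmem)
      · -- f ∈ B : extend m_x along Ptail to b j
        have hfB : (out' m₁).b ∈ B := by
          rcases hfB' with (h | h) | h
          · exact h
          · exact absurd h hfP
          · exact absurd h hfR
        refine assemble hBB' out' hdis' m_x m₁ hmx_ne _ _ j hbend
          (Ptail.copy hmx_bx.symm rfl) (Walk.nil' (out' m₁).b) ?_ Walk.IsPath.nil hbjB hfB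
          ?_ ?_ ?_ ?_ ?_ ?_ ?_ (Or.inl rfl) hstart'
        · rwa [Walk.isPath_copy]
        · intro v hv; rw [Walk.support_copy] at hv; exact hPtailB' v hv
        · intro v hv
          rw [Walk.support_nil, List.mem_singleton] at hv
          subst hv; exact hfB'
        · intro v hv; rw [Walk.support_copy] at hv; exact fun hvB => hPtailB v hv hvB
        · intro v hv
          rw [Walk.support_nil, List.mem_singleton] at hv
          subst hv; exact fun _ => rfl
        · intro v hv hv2
          rw [Walk.support_copy] at hv
          rw [Walk.support_nil, List.mem_singleton] at hv2
          subst hv2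
          exact hfP hv
        · intro m hm
          rw [Walk.support_copy]
          by_cases hm1 : m = m₁
          · subst hm1
            exact hfP
          · exact hend_nP m hm hm1
        · intro m hm
          rw [Walk.support_nil, List.mem_singleton]
          intro hmem
          exact hm (hdinj hmem)
  · -- Case 1 : R is disjoint from the system; just add it
    push_neg at hmeet
    set RP : STP G S B := ⟨aR, tR, R, haR, htR, hRp, hRB⟩ with hRPdef
    have hrlt : r - 1 < r := by omega
    set last : Fin r := ⟨r - 1, hrlt⟩ with hlastdef
    set out : Fin r → STP G S B :=
      fun m => if h : (m : ℕ) < r - 1 then sys ⟨m, h⟩ else RP with houtdef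
    have hlt : ∀ m : Fin r, m ≠ last → (m : ℕ) < r - 1 := by
      intro m hm
      have h1 : (m : ℕ) < r := m.2
      have h2 : (m : ℕ) ≠ r - 1 := fun h => hm (Fin.ext h)
      omega
    have hout_lt : ∀ (m : Fin r) (h : (m : ℕ) < r - 1), out m = sys ⟨m, h⟩ := by
      intro m h
      simp only [houtdef]
      exact dif_pos h
    have hout_ge : ∀ (m : Fin r), ¬ (m : ℕ) < r - 1 → out m = RP := by
      intro m h
      simp only [houtdef]
      exact dif_neg h
    refine ⟨out, ?_, ⟨last, ?_⟩, ⟨last, ?_⟩⟩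
    · intro m m' hmm' v hv hv'
      by_cases h1 : (m : ℕ) < r - 1 <;> by_cases h2 : (m' : ℕ) < r - 1
      · rw [hout_lt m h1] at hv
        rw [hout_lt m' h2] at hv'
        refine hdisjsys ⟨m, h1⟩ ⟨m', h2⟩ ?_ v hv hv'
        intro hcon
        rw [Fin.mk.injEq] at hcon
        exact hmm' (Fin.ext hcon)
      · rw [hout_lt m h1] at hv
        rw [hout_ge m' h2] at hv'
        exact hmeet v hv' ⟨m, h1⟩ hv
      · rw [hout_ge m h1] at hv
        rw [hout_lt m' h2] at hv'
        exact hmeet v hv ⟨m', h2⟩ hv'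
      · exfalso
        apply hmm'
        apply Fin.ext
        have := m.2; have := m'.2
        omega
    · intro m hm
      have h := hlt m hm
      exact ⟨⟨m, h⟩, by rw [hout_lt m h]⟩
    · intro m hm
      have h := hlt m hm
      exact ⟨⟨m, h⟩, by rw [hout_lt m h]⟩

lemma assembleFinal {r : ℕ} {S B₀ : Set V} (T : Set V) (out : Fin r → STP G S B₀)
    (hdis : PDisj out)
    (E : ∀ m, Σ' z, G.Walk (out m).b z)
    (hEp : ∀ m, (E m).2.IsPath)
    (hET : ∀ m, (E m).1 ∈ T)
    (hEB₀ : ∀ m v, v ∈ (E m).2.support → v ∈ B₀)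
    (hEend : ∀ m m', m' ≠ m → (out m').b ∉ (E m).2.support)
    (hEE : ∀ m m', m ≠ m' → ∀ v, v ∈ (E m).2.support → v ∉ (E m').2.support) :
    ∃ (a b : Fin r → V) (Q : ∀ m, G.Walk (a m) (b m)),
      (∀ m, a m ∈ S) ∧ (∀ m, b m ∈ T) ∧ (∀ m, (Q m).IsPath) ∧
      (∀ m m', m ≠ m' → ∀ v, v ∈ (Q m).support → v ∉ (Q m').support) ∧
      (∀ m, a m = (out m).a) ∧ (∀ m, b m = (E m).1) := by
  have hint : ∀ m, ∀ v ∈ (out m).w.support, v ∈ (E m).2.support → v = (out m).b :=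
    fun m v hv hv2 => (out m).hB v hv (hEB₀ m v hv2)
  refine ⟨fun m => (out m).a, fun m => (E m).1,
    fun m => (out m).w.append (E m).2, fun m => (out m).ha, fun m => hET m,
    fun m => appendIsPath (out m).hp (hEp m) (hint m), ?_, fun m => rfl, fun m => rfl⟩
  intro m m' hmm' v hv hv'
  rw [mem_append_iff] at hv hv'
  rcases hv with hv | hv <;> rcases hv' with hv' | hv'
  · exact hdis m m' hmm' v hv hv'
  · have hveq := (out m).hB v hv (hEB₀ m' v hv')
    subst hveq
    exact hEend m' m hmm' hv'
  · have hveq := (out m').hB v hv' (hEB₀ m v hv)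
    exact hEend m m' (Ne.symm hmm') (hveq ▸ hv)
  · exact hEE m m' hmm' v hv hv'

end Helpers

theorem stmt16 (r : ℕ) (hr : 1 ≤ r)
    (V : Type) [Fintype V] (G : SimpleGraph V) (hG : KConnected r G)
    (S T : Set V) (hS : r ≤ S.ncard) (hT : r ≤ T.ncard)
    (s t : Fin (r - 1) → V) (hs : ∀ i, s i ∈ S) (ht : ∀ i, t i ∈ T)
    (P : ∀ i : Fin (r - 1), G.Walk (s i) (t i)) (hP : ∀ i, (P i).IsPath)
    (hdisj : ∀ i j, i ≠ j → ∀ w : V, w ∈ (P i).support → w ∉ (P j).support) :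
    ∃ (a b : Fin r → V) (Q : ∀ i : Fin r, G.Walk (a i) (b i)),
      (∀ i, a i ∈ S) ∧ (∀ i, b i ∈ T) ∧
      (∀ i, (Q i).IsPath) ∧
      (∀ i j, i ≠ j → ∀ w : V, w ∈ (Q i).support → w ∉ (Q j).support) ∧
      (∃ i₀ : Fin r, ∀ i, i ≠ i₀ → ∃ j, a i = s j) ∧
      (∃ i₁ : Fin r, ∀ i, i ≠ i₁ → ∃ j, b i = t j) := by
  classical
  have hsepT : SEP G S r T := sep_of_kconnected hr hG hS hT
  -- split each given path at its first T-vertex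
  have H : ∀ i : Fin (r - 1), ∃ (t' : V) (A : G.Walk (s i) t') (M : G.Walk t' (t i)),
      A.IsPath ∧ M.IsPath ∧ t' ∈ T ∧
      (∀ v ∈ A.support, v ∈ T → v = t') ∧
      (∀ v ∈ A.support, v ∈ M.support → v = t') ∧
      (∀ v ∈ A.support, v ∈ (P i).support) ∧
      (∀ v ∈ M.support, v ∈ (P i).support) := by
    intro i
    obtain ⟨x, W1, W2, h1, h2, hx, hfirst, hint, hs1, hs2, _⟩ :=
      splitAtFirst (· ∈ T) (P i) (hP i) ⟨t i, (P i).end_mem_support, ht i⟩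
    exact ⟨x, W1, W2, h1, h2, hx, hfirst, hint, hs1, hs2⟩
  choose t' A M hA hM ht'T hfirstT hAM hsubA hsubM using H
  -- the enlarged target set
  set B₀ : Set V := T ∪ {v | ∃ i, v ∈ (M i).support} with hB₀def
  have hTB₀ : T ⊆ B₀ := fun v hv => Or.inl hv
  have hsep₀ : SEP G S r B₀ := hsepT.mono hTB₀
  have hMB₀ : ∀ i, ∀ v ∈ (M i).support, v ∈ B₀ := fun i v hv => Or.inr ⟨i, hv⟩
  have ht'P : ∀ i, t' i ∈ (P i).support := fun i =>
    hsubM i _ (M i).start_mem_support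
  have hMdisj : ∀ i i', i ≠ i' → ∀ v ∈ (M i).support, v ∉ (M i').support :=
    fun i i' hii' v hv hv' => hdisj i i' hii' v (hsubM i v hv) (hsubM i' v hv')
  have ht'M : ∀ i i', t' i ∈ (M i').support → i' = i := by
    intro i i' hmem
    by_contra hne
    exact hdisj i' i (fun h => hne h) (t' i) (hsubM i' _ hmem) (ht'P i)
  have hAB₀ : ∀ i, ∀ v ∈ (A i).support, v ∈ B₀ → v = t' i := by
    intro i v hv hvB
    rcases hvB with hvT | ⟨i', hvM⟩
    · exact hfirstT i v hv hvT
    · by_cases h : i' = i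
      · exact hAM i v hv (h ▸ hvM)
      · exact absurd (hsubM i' v hvM)
          (hdisj i i' (fun hh => h hh.symm) v (hsubA i v hv))
  set sys : Fin (r - 1) → STP G S B₀ :=
    fun i => ⟨s i, t' i, A i, hs i, hTB₀ (ht'T i), hA i, hAB₀ i⟩ with hsysdef
  have hPDsys : PDisj sys := by
    intro i i' hii' v hv hv'
    exact hdisj i i' hii' v (hsubA i v hv) (hsubA i' v hv')
  obtain ⟨out, hdis, ⟨m₀, hm₀⟩, ⟨m₁, hm₁⟩⟩ :=
    menger_step hr (B₀ᶜ).ncard B₀ le_rfl hsep₀ sys hPDsys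
  have hdinj : Function.Injective (fun m => (out m).b) := by
    intro m m' he
    by_contra hne'
    have he' : (out m).b = (out m').b := he
    exact hdis m m' hne' (out m).b ((out m).w.end_mem_support)
      (by rw [he']; exact (out m').w.end_mem_support)
  have hm₁' : ∀ m, m ≠ m₁ → ∃ i, (out m).b = t' i := hm₁
  obtain ⟨hsurj, hfree⟩ := count_surj (fun m => (out m).b) hdinj t' m₁ hm₁'
  set I : ∀ m, m ≠ m₁ → Fin (r - 1) := fun m hm => (hm₁' m hm).choose with hIdef
  have hI : ∀ m (hm : m ≠ m₁), (out m).b = t' (I m hm) :=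
    fun m hm => (hm₁' m hm).choose_spec
  have hIinj : ∀ m m' (hm : m ≠ m₁) (hm' : m' ≠ m₁), I m hm = I m' hm' → m = m' := by
    intro m m' hm hm' he
    apply hdinj
    show (out m).b = (out m').b
    rw [hI m hm, hI m' hm', he]
  -- endpoints of out-paths versus corridors
  have hbM : ∀ (m) (hm : m ≠ m₁) (i'), (out m).b ∈ (M i').support → i' = I m hm := by
    intro m hm i' hmem
    rw [hI m hm] at hmem
    exact ht'M _ _ hmem
  have ht'inj : Function.Injective t' := by
    intro i i' he
    exact (ht'M i i' (by rw [he]; exact (M i').start_mem_support)).symm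
  by_cases hα : ∃ i, (out m₁).b ∈ (M i).support
  · -- the free endpoint sits inside a corridor
    obtain ⟨i₀, hfM⟩ := hα
    have hft' : (out m₁).b ≠ t' i₀ := hfree i₀
    have hxseg : t' i₀ ∉ ((M i₀).dropUntil _ hfM).support := by
      intro h
      exact hft' ((take_drop_inter (hM i₀) hfM (t' i₀)
        ((M i₀).takeUntil _ hfM).start_mem_support h).symm)
    have hsegsub : ∀ v ∈ ((M i₀).dropUntil _ hfM).support, v ∈ (M i₀).support :=
      fun v hv => Walk.support_dropUntil_subset _ hfM hv
    set E : ∀ m, Σ' z, G.Walk (out m).b z := fun m =>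
      if h : m = m₁ then
        ⟨t i₀, ((M i₀).dropUntil _ hfM).copy (by rw [h]) rfl⟩
      else if h2 : I m h = i₀ then ⟨(out m).b, Walk.nil⟩
      else ⟨t (I m h), (M (I m h)).copy (hI m h).symm rfl⟩ with hEdef
    have hEm₁ : E m₁ = ⟨t i₀, ((M i₀).dropUntil _ hfM).copy rfl rfl⟩ := by
      simp [hEdef]
    have hEnil : ∀ m (h : m ≠ m₁), I m h = i₀ → E m = ⟨(out m).b, Walk.nil⟩ := by
      intro m h h2
      simp [hEdef, h, h2]
    have hEcopy : ∀ m (h : m ≠ m₁), I m h ≠ i₀ →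
        E m = ⟨t (I m h), (M (I m h)).copy (hI m h).symm rfl⟩ := by
      intro m h h2
      simp [hEdef, h, h2]
    have hsupp_m₁ : ∀ v, v ∈ (E m₁).2.support ↔ v ∈ ((M i₀).dropUntil _ hfM).support := by
      intro v
      rw [hEm₁, Walk.support_copy]
    have hsupp_nil : ∀ m (h : m ≠ m₁) (h2 : I m h = i₀) (v : V),
        v ∈ (E m).2.support ↔ v = (out m).b := by
      intro m h h2 v
      rw [hEnil m h h2]
      simp
    have hsupp_copy : ∀ m (h : m ≠ m₁) (h2 : I m h ≠ i₀) (v : V),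
        v ∈ (E m).2.support ↔ v ∈ (M (I m h)).support := by
      intro m h h2 v
      rw [hEcopy m h h2, Walk.support_copy]
    have hprem1 : ∀ m, (E m).2.IsPath := by
      intro m
      by_cases h : m = m₁
      · rw [h, hEm₁, Walk.isPath_copy]
        exact (hM i₀).dropUntil hfM
      · by_cases h2 : I m h = i₀
        · rw [hEnil m h h2]
          exact Walk.IsPath.nil
        · rw [hEcopy m h h2, Walk.isPath_copy]
          exact hM _
    have hprem2 : ∀ m, (E m).1 ∈ T := by
      intro m
      by_cases h : m = m₁
      · rw [h, hEm₁]
        exact ht i₀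
      · by_cases h2 : I m h = i₀
        · rw [hEnil m h h2]
          show (out m).b ∈ T
          rw [hI m h, h2]
          exact ht'T i₀
        · rw [hEcopy m h h2]
          exact ht _
    have hprem3 : ∀ m v, v ∈ (E m).2.support → v ∈ B₀ := by
      intro m v hv
      by_cases h : m = m₁
      · rw [h] at hv
        rw [hsupp_m₁] at hv
        exact hMB₀ i₀ v (hsegsub v hv)
      · by_cases h2 : I m h = i₀
        · rw [hsupp_nil m h h2] at hv
          subst hv
          exact (out m).hb
        · rw [hsupp_copy m h h2] at hv
          exact hMB₀ _ v hv
    have hprem4 : ∀ m m', m' ≠ m → (out m').b ∉ (E m).2.support := by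
      intro m m' hne hmem
      by_cases h : m = m₁
      · have hne' : m' ≠ m₁ := h ▸ hne
        rw [h] at hmem
        rw [hsupp_m₁] at hmem
        have hIm' := hbM m' hne' i₀ (hsegsub _ hmem)
        rw [hI m' hne', ← hIm'] at hmem
        exact hxseg hmem
      · by_cases h2 : I m h = i₀
        · rw [hsupp_nil m h h2] at hmem
          exact hne (hdinj hmem)
        · by_cases hm' : m' = m₁
          · rw [hsupp_copy m h h2, hm'] at hmem
            exact hMdisj i₀ (I m h) (fun hh => h2 hh.symm) _ hfM hmem
          · rw [hsupp_copy m h h2] at hmem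
            exact hne (hIinj m m' h hm' (hbM m' hm' (I m h) hmem)).symm
    have hprem5 : ∀ m m', m ≠ m' → ∀ v, v ∈ (E m).2.support → v ∉ (E m').2.support := by
      intro m m' hmm' v hv hv'
      by_cases h : m = m₁
      · rw [h] at hv
        rw [hsupp_m₁] at hv
        by_cases h2 : m' = m₁
        · exact hmm' (h.trans h2.symm)
        · by_cases h3 : I m' h2 = i₀
          · rw [hsupp_nil m' h2 h3] at hv'
            subst hv'
            rw [hI m' h2, h3] at hv
            exact hxseg hv
          · rw [hsupp_copy m' h2 h3] at hv'
            exact hMdisj i₀ (I m' h2) (fun hh => h3 hh.symm) v (hsegsub v hv) hv'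
      · by_cases h2 : I m h = i₀
        · rw [hsupp_nil m h h2] at hv
          subst hv
          by_cases h3 : m' = m₁
          · rw [h3] at hv'
            rw [hsupp_m₁] at hv'
            rw [hI m h, h2] at hv'
            exact hxseg hv'
          · by_cases h4 : I m' h3 = i₀
            · exact hmm' (hIinj m m' h h3 (h2.trans h4.symm))
            · rw [hsupp_copy m' h3 h4] at hv'
              rw [hI m h, h2] at hv'
              exact h4 (ht'M i₀ (I m' h3) hv')
        · rw [hsupp_copy m h h2] at hv
          by_cases h3 : m' = m₁
          · rw [h3] at hv'
            rw [hsupp_m₁] at hv'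
            exact hMdisj (I m h) i₀ h2 v hv (hsegsub v hv')
          · by_cases h4 : I m' h3 = i₀
            · rw [hsupp_nil m' h3 h4] at hv'
              subst hv'
              rw [hI m' h3, h4] at hv
              exact h2 (ht'M i₀ (I m h) hv)
            · rw [hsupp_copy m' h3 h4] at hv'
              exact hMdisj (I m h) (I m' h3)
                (fun hh => hmm' (hIinj m m' h h3 hh)) v hv hv'
    obtain ⟨a, b, Q, h1, h2, h3, h4, h5, h6⟩ :=
      assembleFinal (G := G) T out hdis E hprem1 hprem2 hprem3 hprem4 hprem5
    obtain ⟨mstar, hmstar_ne, hmstar_b⟩ := hsurj i₀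
    have hImstar : I mstar hmstar_ne = i₀ := by
      apply ht'inj
      rw [← hI mstar hmstar_ne, hmstar_b]
    refine ⟨a, b, Q, h1, h2, h3, h4, ⟨m₀, ?_⟩, ⟨mstar, ?_⟩⟩
    · intro m hm
      obtain ⟨i, hi⟩ := hm₀ m hm
      exact ⟨i, by rw [h5 m]; exact hi⟩
    · intro m hm
      by_cases hmm₁ : m = m₁
      · refine ⟨i₀, ?_⟩
        rw [hmm₁, h6 m₁, hEm₁]
      · by_cases h2' : I m hmm₁ = i₀
        · exact absurd (hIinj m mstar hmm₁ hmstar_ne (h2'.trans hImstar.symm)) hm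
        · refine ⟨I m hmm₁, ?_⟩
          rw [h6 m, hEcopy m hmm₁ h2']
  · -- the free endpoint is a T-vertex; extend every other path along its corridor
    have hα' : ∀ i, (out m₁).b ∉ (M i).support := fun i h => hα ⟨i, h⟩
    have hfT : (out m₁).b ∈ T := by
      rcases (out m₁).hb with h | ⟨i, h⟩
      · exact h
      · exact absurd h (hα' i)
    set E : ∀ m, Σ' z, G.Walk (out m).b z := fun m =>
      if h : m = m₁ then ⟨(out m).b, Walk.nil⟩
      else ⟨t (I m h), (M (I m h)).copy (hI m h).symm rfl⟩ with hEdef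
    have hEm₁ : E m₁ = ⟨(out m₁).b, Walk.nil⟩ := by simp [hEdef]
    have hEcopy : ∀ m (h : m ≠ m₁),
        E m = ⟨t (I m h), (M (I m h)).copy (hI m h).symm rfl⟩ := by
      intro m h
      simp [hEdef, h]
    have hsupp_m₁ : ∀ v, v ∈ (E m₁).2.support ↔ v = (out m₁).b := by
      intro v
      rw [hEm₁]
      simp
    have hsupp_copy : ∀ m (h : m ≠ m₁) (v : V),
        v ∈ (E m).2.support ↔ v ∈ (M (I m h)).support := by
      intro m h v
      rw [hEcopy m h, Walk.support_copy]
    have hprem1 : ∀ m, (E m).2.IsPath := by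
      intro m
      by_cases h : m = m₁
      · rw [h, hEm₁]
        exact Walk.IsPath.nil
      · rw [hEcopy m h, Walk.isPath_copy]
        exact hM _
    have hprem2 : ∀ m, (E m).1 ∈ T := by
      intro m
      by_cases h : m = m₁
      · rw [h, hEm₁]
        exact hfT
      · rw [hEcopy m h]
        exact ht _
    have hprem3 : ∀ m v, v ∈ (E m).2.support → v ∈ B₀ := by
      intro m v hv
      by_cases h : m = m₁
      · rw [h] at hv
        rw [hsupp_m₁] at hv
        subst hv
        exact (out m₁).hb
      · rw [hsupp_copy m h] at hv
        exact hMB₀ _ v hv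
    have hprem4 : ∀ m m', m' ≠ m → (out m').b ∉ (E m).2.support := by
      intro m m' hne hmem
      by_cases h : m = m₁
      · rw [h] at hmem
        rw [hsupp_m₁] at hmem
        exact hne ((hdinj hmem).trans h.symm)
      · rw [hsupp_copy m h] at hmem
        by_cases h2 : m' = m₁
        · rw [h2] at hmem
          exact hα' (I m h) hmem
        · exact hne (hIinj m m' h h2 (hbM m' h2 (I m h) hmem)).symm
    have hprem5 : ∀ m m', m ≠ m' → ∀ v, v ∈ (E m).2.support → v ∉ (E m').2.support := by
      intro m m' hmm' v hv hv'
      by_cases h : m = m₁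
      · rw [h] at hv
        rw [hsupp_m₁] at hv
        subst hv
        by_cases h2 : m' = m₁
        · exact hmm' (h.trans h2.symm)
        · rw [hsupp_copy m' h2] at hv'
          exact hα' (I m' h2) hv'
      · rw [hsupp_copy m h] at hv
        by_cases h2 : m' = m₁
        · rw [h2] at hv'
          rw [hsupp_m₁] at hv'
          subst hv'
          exact hα' (I m h) hv
        · rw [hsupp_copy m' h2] at hv'
          exact hMdisj (I m h) (I m' h2)
            (fun hh => hmm' (hIinj m m' h h2 hh)) v hv hv'
    obtain ⟨a, b, Q, h1, h2, h3, h4, h5, h6⟩ :=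
      assembleFinal (G := G) T out hdis E hprem1 hprem2 hprem3 hprem4 hprem5
    refine ⟨a, b, Q, h1, h2, h3, h4, ⟨m₀, ?_⟩, ⟨m₁, ?_⟩⟩
    · intro m hm
      obtain ⟨i, hi⟩ := hm₀ m hm
      exact ⟨i, by rw [h5 m]; exact hi⟩
    · intro m hm
      refine ⟨I m hm, ?_⟩
      rw [h6 m, hEcopy m hm]
end

section
/- For every integer k ≥ 4 there are infinitely many integers n such that there exists a k-critical graph on n vertices in which every path has length at most 4(k−1)·(log n)/(log(k−2)). -/
open SimpleGraph

namespace Stmt18Aux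

/-- Addresses: lists over `Fin t` of length at most `d`. -/
abbrev Adr (t d : ℕ) := {l : List (Fin t) // l.length ≤ d}

/-- Vertices: `t` apexes plus tree nodes `(address, isB)`. -/
abbrev Vtx (t d : ℕ) := Fin t ⊕ (Adr t d × Bool)

noncomputable instance (t d : ℕ) : Fintype (Adr t d) := by
  classical
  apply Fintype.ofInjective (fun (x : Adr t d) => (fun i : Fin (d+1) => x.val[(i:ℕ)]? ))
  rintro ⟨l, hl⟩ ⟨l', hl'⟩ h
  simp only [Subtype.mk.injEq]
  apply List.ext_getElem?
  intro n
  by_cases hn : n ≤ d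
  · exact congrFun h ⟨n, by omega⟩
  · rw [List.getElem?_eq_none (by omega), List.getElem?_eq_none (by omega)]

/-- `headOk i l` : apex `i` may be adjacent to the C-node with address `l`. -/
def headOk (i : Fin t) : List (Fin t) → Prop
  | [] => True
  | c :: _ => c ≠ i

/-- apex-to-tree-node adjacency -/
def Apx (t d : ℕ) (i : Fin t) : Adr t d × Bool → Prop
  | (l, false) => headOk i l.val
  | (l, true) => l.val.length = d

/-- tree edges, oriented:  C-node `l` to its own B-node (`l = l'`) or to its parent B-node. -/
def Tre (t d : ℕ) : (Adr t d × Bool) → (Adr t d × Bool) → Prop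
  | (l, false), (l', true) => l.val = l'.val ∨ ∃ c, l.val = c :: l'.val
  | _, _ => False

def Adj' (t d : ℕ) : Vtx t d → Vtx t d → Prop
  | .inl i, .inl j => i ≠ j
  | .inl i, .inr x => Apx t d i x
  | .inr x, .inl i => Apx t d i x
  | .inr x, .inr y => Tre t d x y ∨ Tre t d y x

/-- The Gallai-type graph. -/
def Gr (t d : ℕ) : SimpleGraph (Vtx t d) where
  Adj := Adj' t d
  symm := by
    constructor
    rintro (i | ⟨l, b⟩) (j | ⟨l', b'⟩) h
    · exact Ne.symm h
    · exact h
    · exact h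
    · exact h.symm.imp id id |>.symm.imp id id |>.elim (fun h1 => Or.inr h1) (fun h1 => Or.inl h1)
  loopless := by
    constructor
    rintro (i | ⟨l, b⟩) h
    · exact h rfl
    · rcases h with h | h <;> · cases b <;> simp [Tre] at h

@[simp] lemma adj_inl_inl {t d : ℕ} (i j : Fin t) :
    (Gr t d).Adj (.inl i) (.inl j) ↔ i ≠ j := Iff.rfl

@[simp] lemma adj_inl_inr {t d : ℕ} (i : Fin t) (x : Adr t d × Bool) :
    (Gr t d).Adj (.inl i) (.inr x) ↔ Apx t d i x := Iff.rfl

@[simp] lemma adj_inr_inl {t d : ℕ} (i : Fin t) (x : Adr t d × Bool) :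
    (Gr t d).Adj (.inr x) (.inl i) ↔ Apx t d i x := Iff.rfl

lemma adj_inr_inr {t d : ℕ} (x y : Adr t d × Bool) :
    (Gr t d).Adj (.inr x) (.inr y) ↔ Tre t d x y ∨ Tre t d y x := Iff.rfl

@[simp] lemma apx_false {t d : ℕ} (i : Fin t) (l : Adr t d) :
    Apx t d i (l, false) ↔ headOk i l.val := Iff.rfl

@[simp] lemma apx_true {t d : ℕ} (i : Fin t) (l : Adr t d) :
    Apx t d i (l, true) ↔ l.val.length = d := Iff.rfl

@[simp] lemma tre_iff {t d : ℕ} (l l' : Adr t d) :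
    Tre t d (l, false) (l', true) ↔ (l.val = l'.val ∨ ∃ c, l.val = c :: l'.val) := Iff.rfl

@[simp] lemma tre_ff {t d : ℕ} (l l' : Adr t d) (b : Bool) :
    ¬ Tre t d (l, b) (l', false) := by cases b <;> simp [Tre]

@[simp] lemma tre_tt {t d : ℕ} (l l' : Adr t d) (b : Bool) :
    ¬ Tre t d (l, true) (l', b) := by cases b <;> simp [Tre]

/-- Adjacency between two C-nodes or two B-nodes is impossible. -/
lemma adj_same_bool {t d : ℕ} (l l' : Adr t d) (b : Bool) :
    ¬ (Gr t d).Adj (.inr (l, b)) (.inr (l', b)) := by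
  rw [adj_inr_inr]
  rintro (h | h) <;> cases b <;> simp [Tre] at h

lemma adj_CB {t d : ℕ} (l l' : Adr t d) :
    (Gr t d).Adj (.inr (l, false)) (.inr (l', true)) ↔
      (l.val = l'.val ∨ ∃ c, l.val = c :: l'.val) := by
  rw [adj_inr_inr]
  constructor
  · rintro (h | h)
    · exact (tre_iff l l').mp h
    · exact absurd h (tre_tt l' l false)
  · intro h
    exact Or.inl ((tre_iff l l').mpr h)

lemma adj_BC {t d : ℕ} (l l' : Adr t d) :
    (Gr t d).Adj (.inr (l, true)) (.inr (l', false)) ↔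
      (l'.val = l.val ∨ ∃ c, l'.val = c :: l.val) :=
  (Gr t d).adj_comm _ _ |>.trans (adj_CB l' l)


/-! ### suffix helpers -/

lemma suffix_tail {α : Type*} {c : α} {l L : List α} (h : (c :: l) <:+ L) :
    l <:+ L ∧ l ≠ L := by
  constructor
  · exact (List.suffix_cons c l).trans h
  · rintro rfl
    have := h.length_le
    simp at this

lemma exists_cons_of_strict_suffix {α : Type*} {l L : List α} (h : l <:+ L) (hne : l ≠ L) :
    ∃ c, (c :: l) <:+ L := by
  obtain ⟨s, rfl⟩ := h
  rcases List.eq_nil_or_concat s with rfl | ⟨s', c, rfl⟩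
  · simp at hne
  · exact ⟨c, ⟨s', by simp⟩⟩

lemma cons_suffix_unique {α : Type*} {c c' : α} {l L : List α}
    (h : (c :: l) <:+ L) (h' : (c' :: l) <:+ L) : c = c' := by
  obtain ⟨s, hs⟩ := h
  obtain ⟨s', hs'⟩ := h'
  have hlen : s.length = s'.length := by
    have := congrArg List.length hs
    have := congrArg List.length hs'
    simp at *
    omega
  have := List.append_inj (hs.trans hs'.symm) hlen
  simpa using this.2

lemma drop_of_cons_suffix {α : Type*} {c : α} {l L : List α} (h : (c :: l) <:+ L) :
    L.drop (L.length - l.length - 1) = c :: l := by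
  obtain ⟨s, rfl⟩ := h
  have hl : (s ++ c :: l).length - l.length - 1 = s.length := by
    simp; omega
  rw [hl, List.drop_left]

/-! ### the chain coloring -/

open scoped Classical in
/-- The chain coloring with "damage" at address `L`.  It is a proper coloring of `Gr t d`
except at the single edge between the C-node and B-node at address `L`. -/
noncomputable def defC (t d : ℕ) (L : List (Fin t)) : Vtx t d → Fin (t+1)
  | .inl i => i.castSucc
  | .inr (l, true) =>
      if l.val ≠ L ∧ l.val <:+ L then
        match L.drop (L.length - l.val.length - 1) with
        | c :: _ => c.castSucc
        | [] => Fin.last t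
      else Fin.last t
  | .inr (l, false) =>
      if l.val <:+ L then Fin.last t
      else match l.val with
        | c :: _ => c.castSucc
        | [] => Fin.last t

lemma pal_ne_last {t : ℕ} (i : Fin t) : i.castSucc ≠ Fin.last t :=
  (Fin.castSucc_lt_last i).ne

@[simp] lemma defC_inl {t d : ℕ} (L : List (Fin t)) (i : Fin t) :
    defC t d L (.inl i) = i.castSucc := rfl

lemma defC_B_of_cons_suffix {t d : ℕ} {L : List (Fin t)} {l : Adr t d} {c : Fin t}
    (h : (c :: l.val) <:+ L) :
    defC t d L (.inr (l, true)) = c.castSucc := by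
  obtain ⟨hsuf, hne⟩ := suffix_tail h
  rw [defC, if_pos ⟨hne, hsuf⟩, drop_of_cons_suffix h]

lemma defC_B_of_not {t d : ℕ} {L : List (Fin t)} {l : Adr t d}
    (h : ¬ (l.val ≠ L ∧ l.val <:+ L)) :
    defC t d L (.inr (l, true)) = Fin.last t := by
  rw [defC, if_neg h]

lemma defC_B_eq_last_or {t d : ℕ} (L : List (Fin t)) (l : Adr t d) :
    defC t d L (.inr (l, true)) = Fin.last t ∨
      ∃ c, (c :: l.val) <:+ L ∧ defC t d L (.inr (l, true)) = c.castSucc := by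
  by_cases h : l.val ≠ L ∧ l.val <:+ L
  · obtain ⟨c, hc⟩ := exists_cons_of_strict_suffix h.2 h.1
    exact Or.inr ⟨c, hc, defC_B_of_cons_suffix hc⟩
  · exact Or.inl (defC_B_of_not h)

lemma defC_C_of_suffix {t d : ℕ} {L : List (Fin t)} {l : Adr t d}
    (h : l.val <:+ L) :
    defC t d L (.inr (l, false)) = Fin.last t := by
  rw [defC, if_pos h]

lemma defC_C_of_not {t d : ℕ} {L : List (Fin t)} {l : Adr t d} {c : Fin t} {r : List (Fin t)}
    (h : ¬ l.val <:+ L) (hl : l.val = c :: r) :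
    defC t d L (.inr (l, false)) = c.castSucc := by
  rw [defC, if_neg h, hl]

/-! ### away-from-one-edge proper colorings -/

/-- `f` is a proper coloring of `Gr t d` minus the edge `{u,v}`. -/
def GoodAway (t d : ℕ) (f : Vtx t d → Fin (t+1)) (u v : Vtx t d) : Prop :=
  ∀ x y, (Gr t d).Adj x y → ¬(x = u ∧ y = v) → ¬(x = v ∧ y = u) → f x ≠ f y

lemma GoodAway.symm {t d : ℕ} {f : Vtx t d → Fin (t+1)} {u v : Vtx t d}
    (h : GoodAway t d f u v) : GoodAway t d f v u := fun x y hadj hx hy => h x y hadj hy hx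

/-- Apex colors never collide with tree node colors under `defC`. -/
lemma defC_apex_ne {t d : ℕ} (L : Adr t d) (i : Fin t) (x : Adr t d × Bool)
    (h : Apx t d i x) : defC t d L.val (.inr x) ≠ i.castSucc := by
  obtain ⟨l, b⟩ := x
  cases b with
  | true =>
      rcases defC_B_eq_last_or (t := t) (d := d) L.val l with hv | ⟨c, hc, hv⟩
      · rw [hv]; exact (pal_ne_last i).symm
      · exfalso
        have h1 := hc.length_le
        have h2 := L.property
        have h3 : l.val.length = d := h
        simp [h3] at h1
        omega
  | false =>
      by_cases hs : l.val <:+ L.val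
      · rw [defC_C_of_suffix hs]; exact (pal_ne_last i).symm
      · have hnil : l.val ≠ [] := fun hn => hs (hn ▸ List.nil_suffix)
        obtain ⟨c, r, hl⟩ := List.exists_cons_of_ne_nil hnil
        rw [defC_C_of_not hs hl]
        have hok : headOk i l.val := h
        rw [hl] at hok
        have : c ≠ i := hok
        simpa [Fin.castSucc_inj] using this

/-- The C–B properness for `defC`, oriented. -/
lemma defC_CB_ne {t d : ℕ} (L : Adr t d) (l l' : Adr t d)
    (hadj : l.val = l'.val ∨ ∃ c, l.val = c :: l'.val)
    (hne : ¬(l = L ∧ l' = L)) :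
    defC t d L.val (.inr (l, false)) ≠ defC t d L.val (.inr (l', true)) := by
  rcases hadj with heq | ⟨c, hcons⟩
  · -- own B-node edge
    by_cases hs : l.val <:+ L.val
    · rcases eq_or_ne l.val L.val with hLL | hLL
      · exact absurd ⟨Subtype.ext hLL, Subtype.ext (heq ▸ hLL)⟩ hne
      · rw [defC_C_of_suffix hs]
        obtain ⟨c, hc⟩ := exists_cons_of_strict_suffix hs hLL
        rw [heq] at hc
        rw [defC_B_of_cons_suffix hc]
        exact (pal_ne_last c).symm
    · have hnil : l.val ≠ [] := fun hn => hs (hn ▸ List.nil_suffix)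
      obtain ⟨c, r, hl⟩ := List.exists_cons_of_ne_nil hnil
      rw [defC_C_of_not hs hl, defC_B_of_not (fun hh => hs (heq ▸ hh.2))]
      exact pal_ne_last c
  · -- parent B-node edge : `l = c :: l'`
    by_cases hs : l.val <:+ L.val
    · rw [defC_C_of_suffix hs]
      have hc : (c :: l'.val) <:+ L.val := hcons ▸ hs
      rw [defC_B_of_cons_suffix hc]
      exact (pal_ne_last c).symm
    · rw [defC_C_of_not hs hcons]
      rcases defC_B_eq_last_or (t := t) (d := d) L.val l' with hv | ⟨c', hc', hv⟩
      · rw [hv]; exact pal_ne_last c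
      · rw [hv]
        simp only [ne_eq, Fin.castSucc_inj]
        rintro rfl
        exact hs (hcons ▸ hc')

/-- `defC L` is a proper coloring away from the C–B edge at `L`. -/
lemma defC_good {t d : ℕ} (L : Adr t d) :
    GoodAway t d (defC t d L.val) (.inr (L, false)) (.inr (L, true)) := by
  rintro (i | ⟨l, b⟩) (j | ⟨l', b'⟩) hadj hx hy
  · simpa [Fin.castSucc_inj] using hadj
  · exact (defC_apex_ne L i (l', b') hadj).symm
  · exact defC_apex_ne L j (l, b) hadj
  · cases b with
    | false => cases b' with
      | false => exact absurd hadj (adj_same_bool l l' false)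
      | true =>
          refine defC_CB_ne L l l' ((adj_CB l l').mp hadj) ?_
          rintro ⟨rfl, rfl⟩
          exact hx ⟨rfl, rfl⟩
    | true => cases b' with
      | false =>
          refine (defC_CB_ne L l' l ((adj_BC l l').mp hadj) ?_).symm
          rintro ⟨rfl, rfl⟩
          exact hy ⟨rfl, rfl⟩
      | true => exact absurd hadj (adj_same_bool l l' true)

/-! ### the remaining repairs -/

/-- repair for deletion of an apex–apex edge -/
noncomputable def swapC (t d : ℕ) (i j : Fin t) : Vtx t d → Fin (t+1)
  | .inl s => if s = j then i.castSucc else s.castSucc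
  | .inr (_, true) => Fin.last t
  | .inr (l, false) => match l.val with
    | [] => j.castSucc
    | c :: _ => if c = i then j.castSucc else c.castSucc

lemma swapC_B {t d : ℕ} (i j : Fin t) (l : Adr t d) :
    swapC t d i j (.inr (l, true)) = Fin.last t := rfl

lemma swapC_apex {t d : ℕ} (i j s : Fin t) :
    swapC t d i j (.inl s) = if s = j then i.castSucc else s.castSucc := rfl

lemma swapC_C_nil {t d : ℕ} (i j : Fin t) (l : Adr t d) (h : l.val = []) :
    swapC t d i j (.inr (l, false)) = j.castSucc := by
  simp only [swapC, h]

lemma swapC_C_cons {t d : ℕ} (i j : Fin t) (l : Adr t d) (c : Fin t) (r : List (Fin t))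
    (h : l.val = c :: r) :
    swapC t d i j (.inr (l, false)) = if c = i then j.castSucc else c.castSucc := by
  simp only [swapC, h]

lemma swapC_C_ne_last {t d : ℕ} (i j : Fin t) (l : Adr t d) :
    swapC t d i j (.inr (l, false)) ≠ Fin.last t := by
  rcases hl : l.val with _ | ⟨c, r⟩
  · rw [swapC_C_nil i j l hl]; exact pal_ne_last j
  · rw [swapC_C_cons i j l c r hl]
    by_cases hc : c = i <;> simp [hc, pal_ne_last]

lemma swapC_apex_ne_last {t d : ℕ} (i j s : Fin t) :
    swapC t d i j (.inl s) ≠ Fin.last t := by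
  rw [swapC_apex]
  by_cases hs : s = j <;> simp [hs, pal_ne_last]

lemma good_swap {t d : ℕ} (i j : Fin t) (hij : i ≠ j) :
    GoodAway t d (swapC t d i j) (.inl i) (.inl j) := by
  have apexC : ∀ (s : Fin t) (l : Adr t d), headOk s l.val →
      swapC t d i j (.inl s) ≠ swapC t d i j (.inr (l, false)) := by
    intro s l hok
    rw [swapC_apex]
    rcases hl : l.val with _ | ⟨c, r⟩
    · rw [swapC_C_nil i j l hl]
      by_cases hs : s = j
      · simp only [if_pos hs, ne_eq, Fin.castSucc_inj]; exact hij
      · simp only [if_neg hs, ne_eq, Fin.castSucc_inj]; exact hs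
    · rw [swapC_C_cons i j l c r hl]
      rw [hl] at hok
      have hcs : c ≠ s := hok
      by_cases hs : s = j <;> by_cases hc : c = i <;>
          simp only [hs, hc, ite_true, ite_false, ne_eq, Fin.castSucc_inj]
      · exact hij
      · exact fun h => hc h.symm
      · exact not_false
      · exact fun h => hcs h.symm
  rintro (s | ⟨l, b⟩) (s' | ⟨l', b'⟩) hadj hx hy
  · -- apex apex
    have hss : s ≠ s' := hadj
    rw [swapC_apex, swapC_apex]
    by_cases h1 : s = j <;> by_cases h2 : s' = j <;>
        simp only [h1, h2, ite_true, ite_false, ne_eq, Fin.castSucc_inj]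
    · exact fun _ => hss (h1.trans h2.symm)
    · intro h
      exact hy ⟨by rw [h1], by rw [← h]⟩
    · intro h
      exact hx ⟨by rw [h], by rw [h2]⟩
    · exact hss
  · cases b' with
    | true => rw [swapC_B]; exact swapC_apex_ne_last i j s
    | false => exact apexC s l' hadj
  · cases b with
    | true => rw [swapC_B]; exact fun h => swapC_apex_ne_last i j s' h.symm
    | false => exact fun h => apexC s' l hadj h.symm
  · cases b with
    | false => cases b' with
      | false => exact absurd hadj (adj_same_bool l l' false)
      | true => rw [swapC_B]; exact swapC_C_ne_last i j l
    | true => cases b' with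
      | false => rw [swapC_B]; exact fun h => swapC_C_ne_last i j l' h.symm
      | true => exact absurd hadj (adj_same_bool l l' true)

/-- repair for deletion of an apex–C-node edge -/
lemma good_apexC {t d : ℕ} (l : Adr t d) (i : Fin t) (hok : headOk i l.val) :
    GoodAway t d (Function.update (defC t d l.val) (.inr (l, false)) i.castSucc)
      (.inl i) (.inr (l, false)) := by
  classical
  intro x y hadj hx hy
  set w : Vtx t d := .inr (l, false) with hw
  have key : ∀ (y' : Vtx t d), (Gr t d).Adj w y' → y' ≠ .inl i →
      i.castSucc ≠ Function.update (defC t d l.val) w i.castSucc y' := by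
    intro y' hadj' hy'
    rw [Function.update_of_ne (fun h => (Gr t d).loopless.irrefl w (by rw [h] at hadj'; exact hadj'))]
    rcases y' with j | ⟨l', b'⟩
    · have hji : j ≠ i := fun h => hy' (by rw [h])
      simp only [defC_inl, ne_eq, Fin.castSucc_inj]
      exact fun h => hji h.symm
    · cases b' with
      | false => exact absurd hadj' (adj_same_bool l l' false)
      | true =>
          rcases (adj_CB l l').mp hadj' with heq | ⟨c, hcons⟩
          · rw [defC_B_of_not (fun hh => hh.1 heq.symm)]
            exact pal_ne_last i
          · have hc : (c :: l'.val) <:+ l.val := hcons ▸ List.suffix_refl _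
            rw [defC_B_of_cons_suffix hc]
            have hci : c ≠ i := by rw [hcons] at hok; exact hok
            simp only [ne_eq, Fin.castSucc_inj]
            exact fun h => hci h.symm
  by_cases hxw : x = w
  · subst hxw
    rw [Function.update_self]
    exact key y hadj (fun h => hy ⟨rfl, h⟩)
  · by_cases hyw : y = w
    · subst hyw
      rw [Function.update_self]
      exact fun h => key x ((Gr t d).adj_symm hadj) (fun h' => hx ⟨h', rfl⟩) h.symm
    · rw [Function.update_of_ne hxw, Function.update_of_ne hyw]
      exact defC_good l x y hadj (fun h => hxw h.1) (fun h => hyw h.2)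

/-- repair for deletion of an apex–B-leaf edge -/
lemma good_apexB {t d : ℕ} (l : Adr t d) (i : Fin t) (hleaf : l.val.length = d) :
    GoodAway t d (Function.update (defC t d l.val) (.inr (l, true)) i.castSucc)
      (.inl i) (.inr (l, true)) := by
  classical
  intro x y hadj hx hy
  set w : Vtx t d := .inr (l, true) with hw
  have key : ∀ (y' : Vtx t d), (Gr t d).Adj w y' → y' ≠ .inl i →
      i.castSucc ≠ Function.update (defC t d l.val) w i.castSucc y' := by
    intro y' hadj' hy'
    rw [Function.update_of_ne (fun h => (Gr t d).loopless.irrefl w (by rw [h] at hadj'; exact hadj'))]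
    rcases y' with j | ⟨l', b'⟩
    · have hji : j ≠ i := fun h => hy' (by rw [h])
      simp only [defC_inl, ne_eq, Fin.castSucc_inj]
      exact fun h => hji h.symm
    · cases b' with
      | true => exact absurd hadj' (adj_same_bool l l' true)
      | false =>
          rcases (adj_BC l l').mp hadj' with heq | ⟨c, hcons⟩
          · rw [defC_C_of_suffix (heq ▸ List.suffix_refl _)]
            exact pal_ne_last i
          · -- l' = c :: l is a child of the leaf l : impossible by length
            exfalso
            have h1 := l'.property
            rw [hcons] at h1
            simp [hleaf] at h1
  by_cases hxw : x = w
  · subst hxw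
    rw [Function.update_self]
    exact key y hadj (fun h => hy ⟨rfl, h⟩)
  · by_cases hyw : y = w
    · subst hyw
      rw [Function.update_self]
      exact fun h => key x ((Gr t d).adj_symm hadj) (fun h' => hx ⟨h', rfl⟩) h.symm
    · rw [Function.update_of_ne hxw, Function.update_of_ne hyw]
      exact defC_good l x y hadj (fun h => hyw h.2) (fun h => hxw h.1)

/-- repair for deletion of a B-node–C-child edge -/
lemma good_BC {t d : ℕ} (l lc : Adr t d) (c : Fin t) (hlc : lc.val = c :: l.val) :
    GoodAway t d (Function.update (defC t d lc.val) (.inr (lc, false)) c.castSucc)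
      (.inr (l, true)) (.inr (lc, false)) := by
  classical
  intro x y hadj hx hy
  set w : Vtx t d := .inr (lc, false) with hw
  have key : ∀ (y' : Vtx t d), (Gr t d).Adj w y' → y' ≠ .inr (l, true) →
      c.castSucc ≠ Function.update (defC t d lc.val) w c.castSucc y' := by
    intro y' hadj' hy'
    rw [Function.update_of_ne (fun h => (Gr t d).loopless.irrefl w (by rw [h] at hadj'; exact hadj'))]
    rcases y' with j | ⟨l', b'⟩
    · have hok : headOk j lc.val := hadj'
      rw [hlc] at hok
      have : c ≠ j := hok
      simpa [Fin.castSucc_inj] using this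
    · cases b' with
      | false => exact absurd hadj' (adj_same_bool lc l' false)
      | true =>
          rcases (adj_CB lc l').mp hadj' with heq | ⟨c', hcons⟩
          · rw [defC_B_of_not (fun hh => hh.1 heq.symm)]
            exact pal_ne_last c
          · -- the parent B-node : this is the deleted edge
            exfalso
            apply hy'
            have h3 : (c : Fin t) :: l.val = c' :: l'.val := by rw [← hlc, hcons]
            have h4 : l.val = l'.val := (List.cons.injEq _ _ _ _ |>.mp h3).2
            have h5 : l' = l := Subtype.ext h4.symm
            rw [h5]
  by_cases hxw : x = w
  · subst hxw
    rw [Function.update_self]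
    exact key y hadj (fun h => hy ⟨rfl, h⟩)
  · by_cases hyw : y = w
    · subst hyw
      rw [Function.update_self]
      exact fun h => key x ((Gr t d).adj_symm hadj) (fun h' => hx ⟨h', rfl⟩) h.symm
    · rw [Function.update_of_ne hxw, Function.update_of_ne hyw]
      exact defC_good lc x y hadj (fun h => hxw h.1) (fun h => hyw h.2)

/-! ### the graph is not (t+1)-colorable -/

lemma not_colorable (t d : ℕ) : ¬ (Gr t d).Colorable (t+1) := by
  classical
  rintro ⟨C⟩
  set p : Fin t → Fin (t+1) := fun i => C (.inl i) with hp
  have pinj : Function.Injective p := by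
    intro i j hij
    by_contra hne
    exact C.valid ((adj_inl_inl i j).mpr hne) hij
  have hcc : (Finset.univ.image p)ᶜ.card = 1 := by
    rw [Finset.card_compl, Finset.card_image_of_injective _ pinj, Finset.card_univ,
      Fintype.card_fin, Fintype.card_fin]
    omega
  obtain ⟨K', hK'⟩ := Finset.card_eq_one.mp hcc
  have hmiss : ∀ y : Fin (t+1), (∀ i, p i ≠ y) → y = K' := by
    intro y hy
    have hmem : y ∈ (Finset.univ.image p)ᶜ := by
      rw [Finset.mem_compl, Finset.mem_image]
      rintro ⟨i, -, hi⟩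
      exact hy i hi
    rw [hK'] at hmem
    simpa using hmem
  -- the C-node step
  have cstep : ∀ (l : Adr t d) (c : Fin t) (r : List (Fin t)), l.val = c :: r →
      C (.inr (l, true)) = K' → C (.inr (l, false)) = p c := by
    intro l c r hl hB
    by_contra hne
    have : C (.inr (l, false)) = K' := by
      apply hmiss
      intro i hi
      rcases eq_or_ne i c with rfl | hic
      · exact hne hi.symm
      · have hok : headOk i l.val := by rw [hl]; exact fun h => hic (h ▸ rfl)
        exact C.valid ((adj_inl_inr i (l, false)).mpr hok) hi
    have hadj : (Gr t d).Adj (.inr (l, false)) (.inr (l, true)) :=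
      (adj_CB l l).mpr (Or.inl rfl)
    exact C.valid hadj (this.trans hB.symm)
  -- downward induction
  have force : ∀ m (l : Adr t d), d - l.val.length ≤ m →
      C (.inr (l, true)) = K' ∧
        ∀ c r, l.val = c :: r → C (.inr (l, false)) = p c := by
    intro m
    induction m with
    | zero =>
        intro l hl
        have hlen : l.val.length = d := le_antisymm l.property (by omega)
        have hB : C (.inr (l, true)) = K' := by
          apply hmiss
          intro i hi
          exact C.valid ((adj_inl_inr i (l, true)).mpr hlen) hi
        exact ⟨hB, fun c r hl' => cstep l c r hl' hB⟩
    | succ m ih =>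
        intro l hl
        by_cases hcase : d - l.val.length ≤ m
        · exact ih l hcase
        · have hlen : l.val.length < d := by omega
          have hB : C (.inr (l, true)) = K' := by
            apply hmiss
            intro c hc
            set lc : Adr t d := ⟨c :: l.val, by simp; omega⟩ with hlc
            have hchild := (ih lc (by simp [hlc]; omega)).2 c l.val rfl
            have hadj : (Gr t d).Adj (.inr (l, true)) (.inr (lc, false)) :=
              (adj_BC l lc).mpr (Or.inr ⟨c, rfl⟩)
            exact C.valid hadj (hc.symm.trans hchild.symm)
          exact ⟨hB, fun c r hl' => cstep l c r hl' hB⟩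
  -- contradiction at the centre
  set z : Adr t d := ⟨[], by simp⟩ with hz
  have hzc : C (.inr (z, false)) = K' := by
    apply hmiss
    intro i hi
    have hok : headOk i z.val := trivial
    exact C.valid ((adj_inl_inr i (z, false)).mpr hok) hi
  have htop : C (.inr (z, true)) = K' := (force d z (by simp [hz])).1
  have hadj : (Gr t d).Adj (.inr (z, false)) (.inr (z, true)) :=
    (adj_CB z z).mpr (Or.inl rfl)
  exact C.valid hadj (hzc.trans htop.symm)

/-! ### criticality -/

lemma good_of_adj {t d : ℕ} (u v : Vtx t d) (hadj : (Gr t d).Adj u v) :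
    ∃ f, GoodAway t d f u v := by
  have main : ∀ (i : Fin t) (x : Adr t d × Bool), (Gr t d).Adj (.inl i) (.inr x) →
      ∃ f, GoodAway t d f (.inl i) (.inr x) := by
    rintro i ⟨l, b⟩ h
    cases b with
    | false => exact ⟨_, good_apexC l i h⟩
    | true => exact ⟨_, good_apexB l i h⟩
  have tree : ∀ (l l' : Adr t d), (Gr t d).Adj (.inr (l, false)) (.inr (l', true)) →
      ∃ f, GoodAway t d f (.inr (l, false)) (.inr (l', true)) := by
    intro l l' h
    rcases (adj_CB l l').mp h with heq | ⟨c, hcons⟩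
    · have : l' = l := Subtype.ext heq.symm
      subst this
      exact ⟨_, defC_good l'⟩
    · exact ⟨_, (good_BC l' l c hcons).symm⟩
  rcases u with i | ⟨l, b⟩ <;> rcases v with j | ⟨l', b'⟩
  · exact ⟨_, good_swap i j hadj⟩
  · exact main i (l', b') hadj
  · obtain ⟨f, hf⟩ := main j (l, b) ((Gr t d).adj_symm hadj)
    exact ⟨f, hf.symm⟩
  · cases b with
    | false => cases b' with
      | false => exact absurd hadj (adj_same_bool l l' false)
      | true => exact tree l l' hadj
    | true => cases b' with
      | false =>
          obtain ⟨f, hf⟩ := tree l' l ((Gr t d).adj_symm hadj)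
          exact ⟨f, hf.symm⟩
      | true => exact absurd hadj (adj_same_bool l l' true)

lemma exists_incident {t d : ℕ} (ht : 2 ≤ t) (w : Vtx t d) :
    ∃ u, (Gr t d).Adj w u := by
  rcases w with i | ⟨l, b⟩
  · set j0 : Fin t := ⟨0, by omega⟩ with hj0
    set j1 : Fin t := ⟨1, by omega⟩ with hj1
    by_cases hi : i = j0
    · exact ⟨.inl j1, by rw [adj_inl_inl, hi]; intro h; simp [hj0, hj1, Fin.ext_iff] at h⟩
    · exact ⟨.inl j0, by rw [adj_inl_inl]; exact fun h => hi h⟩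
  · cases b with
    | false => exact ⟨.inr (l, true), (adj_CB l l).mpr (Or.inl rfl)⟩
    | true => exact ⟨.inr (l, false), (Gr t d).adj_symm ((adj_CB l l).mpr (Or.inl rfl))⟩

lemma subgraph_colorable {t d : ℕ} (ht : 2 ≤ t) (H : (Gr t d).Subgraph) (hH : H ≠ ⊤) :
    H.coe.Colorable (t+1) := by
  classical
  by_cases hv : H.verts = Set.univ
  · have hAdj : H.Adj ≠ (Gr t d).Adj := by
      intro h
      exact hH (SimpleGraph.Subgraph.ext hv h)
    have hex : ∃ u v, (Gr t d).Adj u v ∧ ¬ H.Adj u v := by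
      by_contra hno
      push_neg at hno
      apply hAdj
      funext u v
      exact propext ⟨fun h => H.adj_sub h, fun h => hno u v h⟩
    obtain ⟨u, v, huv, hnuv⟩ := hex
    obtain ⟨f, hf⟩ := good_of_adj u v huv
    exact ⟨SimpleGraph.Coloring.mk (fun x => f x.val) (by
      rintro x y hxy
      exact hf x.val y.val (H.adj_sub hxy)
        (by rintro ⟨hx, hy⟩; exact hnuv (hx ▸ hy ▸ hxy))
        (by rintro ⟨hx, hy⟩; exact hnuv (H.adj_symm (hx ▸ hy ▸ hxy))))⟩
  · obtain ⟨w, hw⟩ := (Set.ne_univ_iff_exists_notMem _).mp hv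
    obtain ⟨u', hadj'⟩ := exists_incident ht w
    obtain ⟨f, hf⟩ := good_of_adj w u' hadj'
    exact ⟨SimpleGraph.Coloring.mk (fun x => f x.val) (by
      rintro x y hxy
      exact hf x.val y.val (H.adj_sub hxy)
        (by rintro ⟨hx, -⟩; exact hw (hx ▸ x.property))
        (by rintro ⟨-, hy⟩; exact hw (hy ▸ y.property)))⟩

/-! ### path bound : depth and valley lemmas -/

def dep {t d : ℕ} (x : Adr t d × Bool) : ℕ :=
  2 * x.1.val.length + (if x.2 then 1 else 0)

@[simp] lemma dep_true {t d : ℕ} (l : Adr t d) : dep (l, true) = 2 * l.val.length + 1 := rfl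

@[simp] lemma dep_false {t d : ℕ} (l : Adr t d) : dep (l, false) = 2 * l.val.length := by
  simp [dep]

lemma dep_le {t d : ℕ} (x : Adr t d × Bool) : dep x ≤ 2 * d + 1 := by
  obtain ⟨l, b⟩ := x
  have := l.property
  cases b <;> simp <;> omega

/-- the parent of a tree node -/
def parentV {t d : ℕ} : Adr t d × Bool → Adr t d × Bool
  | (l, true) => (l, false)
  | (l, false) => (⟨l.val.tail, le_trans (l.val.length_tail ▸ Nat.sub_le _ _) l.property⟩, true)

lemma step_dep {t d : ℕ} {a b : Adr t d × Bool}
    (h : (Gr t d).Adj (.inr a) (.inr b)) :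
    dep b = dep a + 1 ∨ dep a = dep b + 1 := by
  obtain ⟨l, bb⟩ := a
  obtain ⟨l', bb'⟩ := b
  cases bb <;> cases bb'
  · exact absurd h (adj_same_bool _ _ _)
  · rcases (adj_CB l l').mp h with heq | ⟨c, hc⟩
    · left; simp only [dep_true, dep_false, heq]
    · right; simp only [dep_true, dep_false, hc, List.length_cons]; omega
  · rcases (adj_BC l l').mp h with heq | ⟨c, hc⟩
    · right; simp only [dep_true, dep_false, heq]
    · left; simp only [dep_true, dep_false, hc, List.length_cons]; omega
  · exact absurd h (adj_same_bool _ _ _)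

lemma down_unique {t d : ℕ} {a b : Adr t d × Bool}
    (h : (Gr t d).Adj (.inr a) (.inr b)) (hdep : dep b < dep a) :
    b = parentV a := by
  obtain ⟨l, bb⟩ := a
  obtain ⟨l', bb'⟩ := b
  cases bb <;> cases bb'
  · exact absurd h (adj_same_bool _ _ _)
  · -- a = C-node, b = B-node with smaller depth : b is the parent
    rcases (adj_CB l l').mp h with heq | ⟨c, hc⟩
    · exfalso; simp only [dep_true, dep_false, heq] at hdep; omega
    · show (l', true) = (⟨l.val.tail, _⟩, true)
      have hv : l'.val = l.val.tail := by rw [hc, List.tail_cons]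
      simp only [Prod.mk.injEq, and_true]
      exact Subtype.ext hv
  · rcases (adj_BC l l').mp h with heq | ⟨c, hc⟩
    · show (l', false) = (l, false)
      simp only [Prod.mk.injEq, and_true]
      exact Subtype.ext heq
    · exfalso; simp only [dep_true, dep_false, hc, List.length_cons] at hdep; omega
  · exact absurd h (adj_same_bool _ _ _)

def zbot (t d : ℕ) : Vtx t d := .inr (⟨[], by simp⟩, false)
def ztop (t d : ℕ) : Vtx t d := .inr (⟨[], by simp⟩, true)

lemma z_nbr {t d : ℕ} {b : Adr t d × Bool}
    (h : (Gr t d).Adj (zbot t d) (.inr b)) : Sum.inr b = ztop t d := by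
  obtain ⟨l', bb'⟩ := b
  cases bb'
  · exact absurd h (adj_same_bool _ _ _)
  · rcases (adj_CB _ l').mp h with heq | ⟨c, hc⟩
    · have : l' = ⟨[], by simp⟩ := Subtype.ext heq.symm
      rw [ztop, this]
    · exact absurd hc.symm (List.cons_ne_nil c l'.val)

/-- On an all-tree path which starts by going up, the depth keeps increasing. -/
lemma ascent {t d : ℕ} :
    ∀ (n : ℕ) (u v : Adr t d × Bool) (p : (Gr t d).Walk (.inr u) (.inr v)),
    p.length = n →
    (∀ y ∈ p.support, ∃ a, y = Sum.inr a) →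
    p.IsPath →
    ∀ (w : Adr t d × Bool), (Gr t d).Adj (.inr w) (.inr u) → dep w < dep u →
      Sum.inr w ∉ p.support →
      dep v = dep u + p.length := by
  intro n
  induction n with
  | zero =>
      intro u v p hlen _ _ _ _ _ _
      have huv : (Sum.inr u : Vtx t d) = .inr v := SimpleGraph.Walk.eq_of_length_eq_zero hlen
      have huv' : u = v := by injection huv
      subst huv'
      omega
  | succ n ih =>
      intro u v p hlen hall hp w hw hdw hwp
      cases p with
      | nil => simp at hlen
      | cons h q =>
          rename_i y
          have hmem : ∀ z ∈ q.support, z ∈ (SimpleGraph.Walk.cons h q).support := by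
            intro z hz
            rw [SimpleGraph.Walk.support_cons]
            exact List.mem_cons_of_mem _ hz
          obtain ⟨x₁, rfl⟩ : ∃ a, y = Sum.inr a := hall y (hmem _ q.start_mem_support)
          have hqpath : q.IsPath := ((SimpleGraph.Walk.cons_isPath_iff h q).mp hp).1
          have hustart : (Sum.inr u : Vtx t d) ∉ q.support :=
            ((SimpleGraph.Walk.cons_isPath_iff h q).mp hp).2
          have hx₁ : dep x₁ = dep u + 1 := by
            rcases step_dep h with h1 | h1
            · exact h1
            · exfalso
              have hb : x₁ = parentV u := down_unique h (by omega)
              have hb' : w = parentV u := down_unique ((Gr t d).adj_symm hw) hdw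
              apply hwp
              apply hmem
              rw [hb'.trans hb.symm]
              exact q.start_mem_support
          have hq_all : ∀ z ∈ q.support, ∃ a, z = Sum.inr a := fun z hz => hall z (hmem z hz)
          have hq : dep v = dep x₁ + q.length :=
            ih x₁ v q (by simpa using hlen) hq_all hqpath u h (by omega) hustart
          rw [SimpleGraph.Walk.length_cons]
          omega

/-- valley bound for all-tree paths -/
lemma valley {t d : ℕ} :
    ∀ (n : ℕ) (u v : Adr t d × Bool) (p : (Gr t d).Walk (.inr u) (.inr v)),
    p.length = n →
    (∀ y ∈ p.support, ∃ a, y = Sum.inr a) →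
    p.IsPath →
    ∀ m : ℕ, (∀ (a : Adr t d × Bool), Sum.inr a ∈ p.support → m ≤ dep a) →
      p.length + 2 * m ≤ dep u + dep v := by
  intro n
  induction n with
  | zero =>
      intro u v p hlen _ _ m hm
      have huv : (Sum.inr u : Vtx t d) = .inr v := SimpleGraph.Walk.eq_of_length_eq_zero hlen
      have huv' : u = v := by injection huv
      subst huv'
      have := hm u p.start_mem_support
      omega
  | succ n ih =>
      intro u v p hlen hall hp m hm
      cases p with
      | nil => simp at hlen
      | cons h q =>
          rename_i y
          have hmem : ∀ z ∈ q.support, z ∈ (SimpleGraph.Walk.cons h q).support := by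
            intro z hz
            rw [SimpleGraph.Walk.support_cons]
            exact List.mem_cons_of_mem _ hz
          obtain ⟨x₁, rfl⟩ : ∃ a, y = Sum.inr a := hall y (hmem _ q.start_mem_support)
          have hmu : m ≤ dep u := hm u ((SimpleGraph.Walk.cons h q).start_mem_support)
          have hq_all : ∀ z ∈ q.support, ∃ a, z = Sum.inr a := fun z hz => hall z (hmem z hz)
          have hq_path : q.IsPath := ((SimpleGraph.Walk.cons_isPath_iff h q).mp hp).1
          rcases step_dep h with h1 | h1
          · -- going up : the rest ascends
            have := ascent q.length x₁ v q rfl hq_all hq_path u h (by omega)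
              ((SimpleGraph.Walk.cons_isPath_iff h q).mp hp).2
            rw [SimpleGraph.Walk.length_cons]
            omega
          · -- going down
            have := ih x₁ v q (by simpa using hlen) hq_all hq_path m
              (fun a ha => hm a (hmem _ ha))
            rw [SimpleGraph.Walk.length_cons]
            omega

/-! ### segment bound -/

lemma dep_eq_zero {t d : ℕ} {a : Adr t d × Bool} (h : dep a = 0) : Sum.inr a = zbot t d := by
  obtain ⟨l, b⟩ := a
  cases b
  · have h0 : l.val.length = 0 := by simpa using h
    have : l = ⟨[], by simp⟩ := Subtype.ext (List.length_eq_zero_iff.mp h0)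
    rw [this]; rfl
  · simp at h

lemma dep_eq_one {t d : ℕ} {a : Adr t d × Bool} (h : dep a = 1) : Sum.inr a = ztop t d := by
  obtain ⟨l, b⟩ := a
  cases b
  · rw [dep_false] at h; omega
  · rw [dep_true] at h
    have h0 : l.val.length = 0 := by omega
    have : l = ⟨[], by simp⟩ := Subtype.ext (List.length_eq_zero_iff.mp h0)
    rw [this]; rfl

/-- a nontrivial all-tree path cannot contain the centre unless it also contains the top. -/
lemma z_mid {t d : ℕ} :
    ∀ (n : ℕ) (u v : Vtx t d) (p : (Gr t d).Walk u v), p.length = n →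
    p.IsPath → (∀ y ∈ p.support, ∃ a, y = Sum.inr a) →
    zbot t d ∈ p.support → ztop t d ∉ p.support →
    p.length = 0 := by
  intro n
  induction n with
  | zero => intro u v p hlen _ _ _ _; exact hlen
  | succ n ih =>
      intro u v p hlen hp hall hz htop
      exfalso
      cases p with
      | nil => simp at hlen
      | cons h q =>
          rename_i y
          rw [SimpleGraph.Walk.support_cons] at hz htop
          rcases List.mem_cons.mp hz with hzu | hzq
          · -- the start is the centre; its unique neighbour is the top
            obtain ⟨b, rfl⟩ : ∃ a, y = Sum.inr a := by
              apply hall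
              rw [SimpleGraph.Walk.support_cons]
              exact List.mem_cons_of_mem _ q.start_mem_support
            have := z_nbr (hzu ▸ h)
            exact htop (List.mem_cons_of_mem _ (this ▸ q.start_mem_support))
          · have hq0 : q.length = 0 := by
              apply ih _ _ q (by rw [SimpleGraph.Walk.length_cons] at hlen; omega)
                ((SimpleGraph.Walk.cons_isPath_iff h q).mp hp).1
                (fun z hz' => hall z (by
                  rw [SimpleGraph.Walk.support_cons]; exact List.mem_cons_of_mem _ hz'))
                hzq (fun hc => htop (List.mem_cons_of_mem _ hc))
            -- q is trivial, so its start (= y) is zbot, and u is adjacent to zbot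
            have hyz : y = zbot t d := by
              have hq : q.support = [y] := by
                cases q with
                | nil => rfl
                | cons h' q' => simp at hq0
              rw [hq] at hzq
              exact (List.mem_singleton.mp hzq).symm
            obtain ⟨a, rfl⟩ : ∃ a, u = Sum.inr a := by
              apply hall
              exact (SimpleGraph.Walk.cons h q).start_mem_support
            have := z_nbr (hyz ▸ (Gr t d).adj_symm h)
            apply htop
            rw [← this]
            exact List.mem_cons_self

lemma seg_bound {t d : ℕ} (hd : 1 ≤ d) (u v : Vtx t d) (p : (Gr t d).Walk u v)
    (hp : p.IsPath) (hall : ∀ y ∈ p.support, ∃ a, y = Sum.inr a) :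
    (ztop t d ∉ p.support → p.length + 2 ≤ 4 * d) ∧ p.length + 2 ≤ 4 * d + 2 := by
  classical
  obtain ⟨ua, rfl⟩ : ∃ a, u = Sum.inr a := hall u p.start_mem_support
  obtain ⟨va, rfl⟩ : ∃ a, v = Sum.inr a := hall v p.end_mem_support
  have hdu := dep_le ua
  have hdv := dep_le va
  rcases Classical.em (ztop t d ∈ p.support) with htop | htop
  · refine ⟨fun hc => absurd htop hc, ?_⟩
    rcases Classical.em (zbot t d ∈ p.support) with hz | hz
    · -- the centre lies on the path : it must be an endpoint
      have hcase : Sum.inr ua = zbot t d ∨ Sum.inr va = zbot t d := by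
        by_contra hcon
        push_neg at hcon
        obtain ⟨h1, h2⟩ := hcon
        set p₂ := p.dropUntil _ hz with hp2
        set p₁ := p.takeUntil _ hz with hp1
        have hspec := p.take_spec hz
        have hnd := hp.support_nodup
        rw [← hspec, SimpleGraph.Walk.support_append] at hnd
        have htop1 : ztop t d ∈ p₁.support := by
          have hne : p₁.length ≠ 0 := by
            intro h0
            exact h1 (SimpleGraph.Walk.eq_of_length_eq_zero h0)
          cases hrev : p₁.reverse with
          | nil =>
              exfalso
              apply hne
              have := congrArg SimpleGraph.Walk.length hrev
              rw [SimpleGraph.Walk.length_reverse] at this; exact this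
          | cons h' q' =>
              rename_i y'
              obtain ⟨b, rfl⟩ : ∃ a, y' = Sum.inr a := by
                apply hall
                have hy' : y' ∈ p₁.reverse.support := by
                  rw [hrev, SimpleGraph.Walk.support_cons]
                  exact List.mem_cons_of_mem _ q'.start_mem_support
                rw [SimpleGraph.Walk.support_reverse, List.mem_reverse] at hy'
                exact (p.support_takeUntil_subset hz) hy'
              have hb := z_nbr h'
              have hmem : Sum.inr b ∈ p₁.reverse.support := by
                rw [hrev, SimpleGraph.Walk.support_cons]
                exact List.mem_cons_of_mem _ q'.start_mem_support
              rw [SimpleGraph.Walk.support_reverse, List.mem_reverse] at hmem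
              rwa [hb] at hmem
        have htop2 : ztop t d ∈ p₂.support.tail := by
          have hne : p₂.length ≠ 0 := by
            intro h0
            exact h2 ((SimpleGraph.Walk.eq_of_length_eq_zero h0).symm)
          cases hp2' : p₂ with
          | nil =>
              exfalso
              apply hne
              rw [hp2']
              rfl
          | cons h' q' =>
              rename_i y'
              obtain ⟨b, rfl⟩ : ∃ a, y' = Sum.inr a := by
                apply hall
                have hy' : y' ∈ p₂.support := by
                  rw [hp2', SimpleGraph.Walk.support_cons]
                  exact List.mem_cons_of_mem _ q'.start_mem_support
                exact (p.support_dropUntil_subset hz) hy'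
              have hb := z_nbr h'
              rw [SimpleGraph.Walk.support_cons, List.tail_cons]
              exact hb ▸ q'.start_mem_support
        exact (List.disjoint_of_nodup_append hnd) htop1 htop2
      have hval : p.length ≤ dep ua + dep va := by
        have := valley p.length ua va p rfl hall hp 0 (fun _ _ => Nat.zero_le _)
        omega
      rcases hcase with hc | hc
      · have hua : ua = (⟨[], by simp⟩, false) := by
          rw [zbot] at hc
          injection hc
        have : dep ua = 0 := by rw [hua]; simp
        omega
      · have hva : va = (⟨[], by simp⟩, false) := by
          rw [zbot] at hc
          injection hc
        have : dep va = 0 := by rw [hva]; simp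
        omega
    · have hv1 : ∀ (a : Adr t d × Bool), Sum.inr a ∈ p.support → 1 ≤ dep a := by
        intro a ha
        by_contra hlt
        push_neg at hlt
        have h0 : dep a = 0 := by omega
        exact hz (dep_eq_zero h0 ▸ ha)
      have := valley p.length ua va p rfl hall hp 1 hv1
      omega
  · have hmain : p.length + 2 ≤ 4 * d := by
      rcases Classical.em (zbot t d ∈ p.support) with hz | hz
      · have := z_mid p.length _ _ p rfl hp hall hz htop
        omega
      · have hv2 : ∀ (a : Adr t d × Bool), Sum.inr a ∈ p.support → 2 ≤ dep a := by
          intro a ha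
          by_contra hlt
          push_neg at hlt
          have h01 : dep a = 0 ∨ dep a = 1 := by omega
          rcases h01 with h0 | h0
          · exact hz (dep_eq_zero h0 ▸ ha)
          · exact htop (dep_eq_one h0 ▸ ha)
        have := valley p.length ua va p rfl hall hp 2 hv2
        omega
    exact ⟨fun _ => hmain, by omega⟩

/-! ### master path bound -/

/-- number of apex vertices on a walk -/
def ac {t d : ℕ} {u v : Vtx t d} (p : (Gr t d).Walk u v) : ℕ :=
  (p.support.filter (fun x => x.isLeft)).length

lemma master {t d : ℕ} (hd : 1 ≤ d) :
    ∀ (c : ℕ) (u v : Vtx t d) (p : (Gr t d).Walk u v), p.IsPath → ac p ≤ c →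
      (ztop t d ∉ p.support → p.length + 2 ≤ 4*d*(c+1)) ∧
        p.length + 2 ≤ 4*d*(c+1) + 2 := by
  intro c
  induction c using Nat.strong_induction_on with
  | _ c ih =>
    intro u v p hp hc
    have hD1 : 4*d*1 ≤ 4*d*(c+1) := Nat.mul_le_mul_left _ (by omega)
    rw [mul_one] at hD1
    rcases Classical.em (∃ i : Fin t, Sum.inl i ∈ p.support) with ⟨i, hi⟩ | hap
    · -- split at the apex (inl i)
      set p₁ := p.takeUntil _ hi with hp1
      set p₂ := p.dropUntil _ hi with hp2
      have hspec : p₁.append p₂ = p := p.take_spec hi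
      have hp₁ : p₁.IsPath := hp.takeUntil hi
      have hp₂ : p₂.IsPath := hp.dropUntil hi
      clear_value p₁ p₂
      clear hp1 hp2
      have hlen : p.length = p₁.length + p₂.length := by
        have := congrArg SimpleGraph.Walk.length hspec
        rw [SimpleGraph.Walk.length_append] at this
        omega
      have hsup : p.support = p₁.support ++ p₂.support.tail := by
        have := congrArg SimpleGraph.Walk.support hspec
        rw [SimpleGraph.Walk.support_append] at this
        exact this.symm
      have hnd : (p₁.support ++ p₂.support.tail).Nodup := by
        rw [← hsup]; exact hp.support_nodup
      have hdisj := List.disjoint_of_nodup_append hnd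
      have hac : ac p = (p₁.support.filter (fun x => x.isLeft)).length
          + (p₂.support.tail.filter (fun x => x.isLeft)).length := by
        rw [ac, hsup, List.filter_append, List.length_append]
      -- analyze p₁ by reversing
      set q₁ := p₁.reverse with hq1
      have hq₁sup : q₁.support = p₁.support.reverse := SimpleGraph.Walk.support_reverse _
      have hq₁filter : (p₁.support.filter (fun x => x.isLeft)).length
          = (q₁.support.filter (fun x => x.isLeft)).length := by
        rw [hq₁sup, List.filter_reverse, List.length_reverse]
      have hq₁len : q₁.length = p₁.length := SimpleGraph.Walk.length_reverse _
      have hq₁path : q₁.IsPath := hp₁.reverse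
      have htne : (ztop t d) ≠ Sum.inl i := by rw [ztop]; simp
      -- we do a case analysis on the two sides being trivial or not
      cases hq₁c : q₁ with
      | nil =>
          -- u = inl i ; p₁ trivial
          have hlen₁ : p₁.length = 0 := by rw [← hq₁len, hq₁c]; rfl
          have hsup₁ : p₁.support = [Sum.inl i] := by
            have : q₁.support = [Sum.inl i] := by rw [hq₁c]; rfl
            rw [hq₁sup] at this
            have := congrArg List.reverse this
            simpa using this
          cases hp₂c : p₂ with
          | nil =>
              have hlen₂ : p₂.length = 0 := by rw [hp₂c]; rfl
              constructor
              · intro _; omega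
              · omega
          | cons h₂ r₂ =>
              have hr₂path : r₂.IsPath := by
                have := hp₂
                rw [hp₂c] at this
                exact ((SimpleGraph.Walk.cons_isPath_iff _ _).mp this).1
              have hsup₂t : p₂.support.tail = r₂.support := by
                rw [hp₂c, SimpleGraph.Walk.support_cons, List.tail_cons]
              have hacr₂ : ac r₂ + 1 ≤ c := by
                have h1 : (p₁.support.filter (fun x => x.isLeft)).length = 1 := by
                  rw [hsup₁]; rfl
                rw [hac, h1, hsup₂t] at hc
                simp only [ac]
                omega
              have hIH := ih (ac r₂) (by omega) _ _ r₂ hr₂path le_rfl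
              have hkey : 4*d*(ac r₂+1) ≤ 4*d*c := Nat.mul_le_mul_left _ (by omega)
              have hkey2 : 4*d*c + 4*d = 4*d*(c+1) := by ring
              have hlen₂ : p₂.length = r₂.length + 1 := by
                rw [hp₂c, SimpleGraph.Walk.length_cons]
              constructor
              · intro htop
                have htopr₂ : ztop t d ∉ r₂.support := by
                  intro hmem
                  exact htop (by rw [hsup, hsup₂t]; exact List.mem_append_right _ hmem)
                have := hIH.1 htopr₂
                omega
              · have := hIH.2
                omega
      | cons h₁ r₁ =>
          rename_i y₁
          have hr₁path : r₁.IsPath := by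
            have := hq₁path
            rw [hq₁c] at this
            exact ((SimpleGraph.Walk.cons_isPath_iff _ _).mp this).1
          have hq₁supc : q₁.support = Sum.inl i :: r₁.support := by
            rw [hq₁c, SimpleGraph.Walk.support_cons]
          have hfil₁ : (p₁.support.filter (fun x => x.isLeft)).length = ac r₁ + 1 := by
            rw [hq₁filter, hq₁supc, List.filter_cons]
            simp [ac]
          have hlen₁ : p₁.length = r₁.length + 1 := by
            rw [← hq₁len, hq₁c, SimpleGraph.Walk.length_cons]
          have htop₁ : ztop t d ∈ p₁.support ↔ ztop t d ∈ r₁.support := by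
            constructor
            · intro hm
              have : ztop t d ∈ q₁.support := by
                rw [hq₁sup, List.mem_reverse]; exact hm
              rw [hq₁supc] at this
              rcases List.mem_cons.mp this with h | h
              · exact absurd h htne
              · exact h
            · intro hm
              have : ztop t d ∈ q₁.support := by
                rw [hq₁supc]; exact List.mem_cons_of_mem _ hm
              rw [hq₁sup, List.mem_reverse] at this
              exact this
          cases hp₂c : p₂ with
          | nil =>
              have hlen₂ : p₂.length = 0 := by rw [hp₂c]; rfl
              have hacr₁ : ac r₁ + 1 ≤ c := by
                rw [hac, hfil₁] at hc
                omega
              have hIH := ih (ac r₁) (by omega) _ _ r₁ hr₁path le_rfl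
              have hkey : 4*d*(ac r₁+1) ≤ 4*d*c := Nat.mul_le_mul_left _ (by omega)
              have hkey2 : 4*d*c + 4*d = 4*d*(c+1) := by ring
              constructor
              · intro htop
                have htopr₁ : ztop t d ∉ r₁.support := by
                  intro hmem
                  exact htop (by rw [hsup]; exact List.mem_append_left _ (htop₁.mpr hmem))
                have := hIH.1 htopr₁
                omega
              · have := hIH.2
                omega
          | cons h₂ r₂ =>
              have hr₂path : r₂.IsPath := by
                have := hp₂
                rw [hp₂c] at this
                exact ((SimpleGraph.Walk.cons_isPath_iff _ _).mp this).1
              have hsup₂t : p₂.support.tail = r₂.support := by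
                rw [hp₂c, SimpleGraph.Walk.support_cons, List.tail_cons]
              have hlen₂ : p₂.length = r₂.length + 1 := by
                rw [hp₂c, SimpleGraph.Walk.length_cons]
              have hacsum : ac r₁ + ac r₂ + 1 ≤ c := by
                rw [hac, hfil₁, hsup₂t] at hc
                simp only [ac] at hc ⊢
                omega
              have hIH₁ := ih (ac r₁) (by omega) _ _ r₁ hr₁path le_rfl
              have hIH₂ := ih (ac r₂) (by omega) _ _ r₂ hr₂path le_rfl
              have hkey : 4*d*(ac r₁+1) + 4*d*(ac r₂+1) ≤ 4*d*(c+1) := by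
                have h1 : 4*d*(ac r₁+1) + 4*d*(ac r₂+1) = 4*d*(ac r₁ + ac r₂ + 2) := by ring
                rw [h1]
                exact Nat.mul_le_mul_left _ (by omega)
              have hnotboth : ¬ (ztop t d ∈ r₁.support ∧ ztop t d ∈ r₂.support) := by
                rintro ⟨hm1, hm2⟩
                exact hdisj (htop₁.mpr hm1) (hsup₂t ▸ hm2)
              constructor
              · intro htop
                have ht₁ : ztop t d ∉ r₁.support := fun hm =>
                  htop (by rw [hsup]; exact List.mem_append_left _ (htop₁.mpr hm))
                have ht₂ : ztop t d ∉ r₂.support := fun hm =>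
                  htop (by rw [hsup, hsup₂t]; exact List.mem_append_right _ hm)
                have b₁ := hIH₁.1 ht₁
                have b₂ := hIH₂.1 ht₂
                omega
              · rcases Classical.em (ztop t d ∈ r₁.support) with hm1 | hm1
                · have hm2 : ztop t d ∉ r₂.support := fun hm => hnotboth ⟨hm1, hm⟩
                  have b₁ := hIH₁.2
                  have b₂ := hIH₂.1 hm2
                  omega
                · have b₁ := hIH₁.1 hm1
                  have b₂ := hIH₂.2
                  omega
    · -- no apex : a pure tree path
      have hall : ∀ y ∈ p.support, ∃ a, y = Sum.inr a := by
        intro y hy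
        rcases y with i | a
        · exact absurd ⟨i, hy⟩ hap
        · exact ⟨a, rfl⟩
      have hseg := seg_bound hd u v p hp hall
      constructor
      · intro htop
        have := hseg.1 htop
        omega
      · have := hseg.2
        omega

/-! ### final combinatorial facts -/

lemma ac_le_t {t d : ℕ} (ht : 1 ≤ t) {u v : Vtx t d} (p : (Gr t d).Walk u v)
    (hp : p.IsPath) : ac p ≤ t := by
  classical
  have hnd : (p.support.filter (fun x => x.isLeft)).Nodup := hp.support_nodup.filter _
  set L := p.support.filter (fun x => x.isLeft) with hL
  have hmem : ∀ x ∈ L, ∃ a : Fin t, x = Sum.inl a := by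
    intro x hx
    have := (List.mem_filter.mp hx).2
    rcases x with a | b
    · exact ⟨a, rfl⟩
    · simp at this
  set f : Vtx t d → Fin t := Sum.elim id (fun _ => ⟨0, ht⟩) with hf
  have hmap : (L.map f).Nodup := by
    apply hnd.map_on
    intro x hx y hy hxy
    obtain ⟨a, rfl⟩ := hmem x hx
    obtain ⟨b, rfl⟩ := hmem y hy
    simp only [hf, Sum.elim_inl, id] at hxy
    rw [hxy]
  have := hmap.length_le_card
  rw [List.length_map] at this
  simpa [ac, Fintype.card_fin] using this

lemma path_bound {t d : ℕ} (ht : 1 ≤ t) (hd : 1 ≤ d) {u v : Vtx t d}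
    (p : (Gr t d).Walk u v) (hp : p.IsPath) : p.length ≤ 4*d*(t+1) := by
  have := (master hd t u v p hp (ac_le_t ht p hp)).2
  omega

lemma card_ge {t d : ℕ} : t ^ d ≤ Fintype.card (Vtx t d) := by
  classical
  have hinj : Function.Injective
      (fun (g : Fin d → Fin t) => (Sum.inr (⟨List.ofFn g, by simp⟩, true) : Vtx t d)) := by
    intro g g' h
    simp only [Sum.inr.injEq, Prod.mk.injEq, Subtype.mk.injEq, and_true] at h
    exact List.ofFn_injective h
  calc t ^ d = Fintype.card (Fin d → Fin t) := by
        rw [Fintype.card_fun, Fintype.card_fin, Fintype.card_fin]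
    _ ≤ Fintype.card (Vtx t d) := Fintype.card_le_of_injective _ hinj

end Stmt18Aux



open SimpleGraph

/-- A graph `G` is `k`-critical if every proper subgraph of `G` is `(k-1)`-colorable,
but `G` itself is not. -/
def IsCritical {V : Type*} (k : ℕ) (G : SimpleGraph V) : Prop :=
  ¬ G.Colorable (k - 1) ∧ ∀ H : G.Subgraph, H ≠ ⊤ → H.coe.Colorable (k - 1)

theorem stmt18 (k : ℕ) (hk : 4 ≤ k) :
    ∀ m : ℕ, ∃ n : ℕ, m ≤ n ∧
      ∃ G : SimpleGraph (Fin n), IsCritical k G ∧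
        ∀ (u v : Fin n) (p : G.Walk u v), p.IsPath →
          (p.length : ℝ) ≤ 4 * ((k : ℝ) - 1) * Real.log n / Real.log ((k : ℝ) - 2) := by
    classical
  intro m
  set t : ℕ := k - 2 with htdef
  have ht2 : 2 ≤ t := by omega
  have hkt : k = t + 2 := by omega
  set d : ℕ := m + 1 with hddef
  have hd1 : 1 ≤ d := by omega
  set n : ℕ := Fintype.card (Stmt18Aux.Vtx t d) with hndef
  have hcard : t ^ d ≤ n := Stmt18Aux.card_ge
  have hmn : m ≤ n := by
    have h1 : 2 ^ d ≤ t ^ d := Nat.pow_le_pow_left (by omega) d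
    have h2 : m < 2 ^ m := Nat.lt_two_pow_self
    have h3 : (2:ℕ) ^ m ≤ 2 ^ d := Nat.pow_le_pow_right (by omega) (by omega)
    omega
  refine ⟨n, hmn, ?_⟩
  set e := Fintype.equivFin (Stmt18Aux.Vtx t d) with hedef
  set G' : SimpleGraph (Fin n) :=
    { Adj := fun a b => (Stmt18Aux.Gr t d).Adj (e.symm a) (e.symm b)
      symm := ⟨fun a b h => (Stmt18Aux.Gr t d).adj_symm h⟩
      loopless := ⟨fun a h => (Stmt18Aux.Gr t d).loopless.irrefl _ h⟩ } with hG'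
  have hk1 : k - 1 = t + 1 := by omega
  refine ⟨G', ⟨?_, ?_⟩, ?_⟩
  · -- not (k-1)-colorable
    rw [hk1]
    rintro ⟨C⟩
    apply Stmt18Aux.not_colorable t d
    refine ⟨SimpleGraph.Coloring.mk (fun x => C (e x)) ?_⟩
    intro a b hab
    apply C.valid
    show (Stmt18Aux.Gr t d).Adj (e.symm (e a)) (e.symm (e b))
    simpa using hab
  · -- all proper subgraphs are (k-1)-colorable
    intro H hH
    rw [hk1]
    set Hb : (Stmt18Aux.Gr t d).Subgraph :=
      { verts := {x | e x ∈ H.verts}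
        Adj := fun x y => H.Adj (e x) (e y)
        adj_sub := fun {x y} h => by
          have h2 := H.adj_sub h
          show (Stmt18Aux.Gr t d).Adj x y
          have h3 : (Stmt18Aux.Gr t d).Adj (e.symm (e x)) (e.symm (e y)) := h2
          simpa using h3
        edge_vert := fun {x y} h => H.edge_vert h
        symm := ⟨fun x y h => H.adj_symm h⟩ } with hHb
    have hHbne : Hb ≠ ⊤ := by
      intro hb
      apply hH
      have hv : Hb.verts = Set.univ := by rw [hb, SimpleGraph.Subgraph.verts_top]
      have ha : ∀ x y, Hb.Adj x y ↔ (Stmt18Aux.Gr t d).Adj x y := by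
        intro x y
        rw [hb]
        exact SimpleGraph.Subgraph.top_adj
      apply SimpleGraph.Subgraph.ext
      · rw [SimpleGraph.Subgraph.verts_top]
        apply Set.eq_univ_iff_forall.mpr
        intro b
        have : e.symm b ∈ Hb.verts := by rw [hv]; trivial
        have h2 : e (e.symm b) ∈ H.verts := this
        simpa using h2
      · funext a b
        apply propext
        constructor
        · exact fun h => H.adj_sub h
        · intro h
          have h2 : Hb.Adj (e.symm a) (e.symm b) := by
            apply (ha _ _).mpr
            exact h
          have h3 : H.Adj (e (e.symm a)) (e (e.symm b)) := h2
          simpa using h3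
    obtain ⟨CH⟩ := Stmt18Aux.subgraph_colorable ht2 Hb hHbne
    refine ⟨SimpleGraph.Coloring.mk
      (fun x => CH ⟨e.symm x.val, ?_⟩) ?_⟩
    · show e (e.symm x.val) ∈ H.verts
      simpa using x.property
    · rintro x y hxy
      apply CH.valid
      show Hb.Adj (e.symm x.val) (e.symm y.val)
      show H.Adj (e (e.symm x.val)) (e (e.symm y.val))
      simpa using hxy
  · -- the path bound
    intro u v p hp
    set ψ : G' →g (Stmt18Aux.Gr t d) := { toFun := e.symm, map_rel' := fun {a b} h => h }
      with hψ
    have hmappath : (p.map ψ).IsPath :=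
      SimpleGraph.Walk.map_isPath_of_injective (Equiv.injective e.symm) hp
    have hb := Stmt18Aux.path_bound (t := t) (d := d) (by omega) hd1 (p.map ψ) hmappath
    rw [SimpleGraph.Walk.length_map] at hb
    have hc1 : (k : ℝ) - 1 = (t : ℝ) + 1 := by rw [hkt]; push_cast; ring
    have hc2 : (k : ℝ) - 2 = (t : ℝ) := by rw [hkt]; push_cast; ring
    rw [hc1, hc2]
    have hlogt : 0 < Real.log t := Real.log_pos (by exact_mod_cast (by omega : 1 < t))
    have hlogn : (d : ℝ) * Real.log t ≤ Real.log n := by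
      have h1 : ((t:ℝ)) ^ d ≤ (n:ℝ) := by exact_mod_cast hcard
      have h2 : Real.log ((t:ℝ)^d) ≤ Real.log n := Real.log_le_log (by positivity) h1
      rwa [Real.log_pow] at h2
    rw [le_div_iff₀ hlogt]
    have hp1 : (p.length : ℝ) ≤ 4*(d:ℝ)*((t:ℝ)+1) := by exact_mod_cast hb
    calc (p.length:ℝ) * Real.log t ≤ (4*(d:ℝ)*((t:ℝ)+1)) * Real.log t :=
          mul_le_mul_of_nonneg_right hp1 hlogt.le
      _ = 4*((t:ℝ)+1) * ((d:ℝ) * Real.log t) := by ring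
      _ ≤ 4*((t:ℝ)+1) * Real.log n := by
          apply mul_le_mul_of_nonneg_left hlogn (by positivity)
end
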